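/- arXiv:1704.07213 — 6 statements merged into one kernel-verified Lean document; each statement's English description precedes it below -/
import Mathlib

section
/- Let a_1 ≥ b_1 ≥ a_2 ≥ b_2 ≥ … ≥ a_k ≥ b_k ≥ a_{k+1} be real numbers. Then there exist complex numbers z_1, …, z_k and a real number z_{k+1} such that the (k+1)×(k+1) Hermitian matrix with diagonal entries b_1,…,b_k,z_{k+1}, last column entries \bar{z}_1,…,\bar{z}_k above z_{k+1}, last row entries z_1,…,z_k, and zeros elsewhere, has eigenvalues exactly a_1, …, a_{k+1} (with multiplicity). -/
open Polynomial

/-- The Hermitian "arrow" matrix with diagonal `b 0, …, b (k-1), w`, last column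
`conj (z 0), …, conj (z (k-1))`, last row `z 0, …, z (k-1)`, and zeros elsewhere. -/
noncomputable def arrowMatrix {k : ℕ} (b : Fin k → ℝ) (z : Fin k → ℂ) (w : ℝ) :
    Matrix (Fin (k + 1)) (Fin (k + 1)) ℂ := fun i j =>
  if hik : (i : ℕ) < k then
    if hjk : (j : ℕ) < k then
      if i = j then ((b ⟨(i : ℕ), hik⟩ : ℝ) : ℂ) else 0
    else (starRingEnd ℂ) (z ⟨(i : ℕ), hik⟩)
  else
    if hjk : (j : ℕ) < k then z ⟨(j : ℕ), hjk⟩ else ((w : ℝ) : ℂ)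

section Aux
open Finset


variable {R : Type*} [CommRing R]

lemma arrow_det {k : ℕ} (M : Matrix (Fin (k+1)) (Fin (k+1)) R)
    (h0 : ∀ i j, i ≠ j → i ≠ Fin.last k → j ≠ Fin.last k → M i j = 0) :
    M.det = (∏ i : Fin k, M i.castSucc i.castSucc) * M (Fin.last k) (Fin.last k)
      - ∑ i : Fin k, M (Fin.last k) i.castSucc * M i.castSucc (Fin.last k) *
          ∏ j ∈ Finset.univ.erase i, M j.castSucc j.castSucc := by
  classical
  set S : Finset (Equiv.Perm (Fin (k+1))) :=
    insert 1 ((Finset.univ : Finset (Fin k)).image fun i => Equiv.swap i.castSucc (Fin.last k))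
    with hS
  have key : ∀ σ : Equiv.Perm (Fin (k+1)), σ ∉ S →
      ∃ j, σ j ≠ j ∧ σ j ≠ Fin.last k ∧ j ≠ Fin.last k := by
    intro σ hσ
    by_contra hc
    push_neg at hc
    apply hσ
    by_cases hlast : σ (Fin.last k) = Fin.last k
    · have : σ = 1 := by
        ext j
        rcases eq_or_ne j (Fin.last k) with rfl | hj
        · simp only [Equiv.Perm.one_apply]; exact congrArg Fin.val hlast
        · rcases eq_or_ne (σ j) j with h | h
          · simp only [Equiv.Perm.one_apply]; exact congrArg Fin.val h
          · rcases eq_or_ne (σ j) (Fin.last k) with h2 | h2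
            · exact absurd (σ.injective (h2.trans hlast.symm)) hj
            · exact absurd (hc j h h2) hj
      rw [this]; exact Finset.mem_insert_self _ _
    · obtain ⟨i, hσi⟩ : ∃ i, σ i = Fin.last k := ⟨σ⁻¹ (Fin.last k), σ.apply_symm_apply _⟩
      have hine : i ≠ Fin.last k := by
        intro h; rw [h] at hσi; exact hlast hσi
      -- σ last = i
      have hfix : ∀ j, j ≠ Fin.last k → j ≠ i → σ j = j := by
        intro j hj hji
        rcases eq_or_ne (σ j) j with h | h
        · exact h
        · rcases eq_or_ne (σ j) (Fin.last k) with h2 | h2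
          · exact absurd (σ.injective (h2.trans hσi.symm)) hji
          · exact absurd (hc j h h2) hj
      have hσlast : σ (Fin.last k) = i := by
        rcases eq_or_ne (σ (Fin.last k)) i with h | h
        · exact h
        · have hne : σ (Fin.last k) ≠ Fin.last k := hlast
          have := hfix (σ (Fin.last k)) hne h
          exact absurd (σ.injective this) (fun hh => hne hh)
      have hσeq : σ = Equiv.swap i (Fin.last k) := by
        ext j
        rcases eq_or_ne j i with rfl | hji
        · rw [hσi, Equiv.swap_apply_left]
        · rcases eq_or_ne j (Fin.last k) with rfl | hj
          · rw [hσlast, Equiv.swap_apply_right]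
          · rw [hfix j hj hji, Equiv.swap_apply_of_ne_of_ne hji hj]
      obtain ⟨m, rfl⟩ : ∃ m : Fin k, i = m.castSucc := by
        refine ⟨⟨(i : ℕ), ?_⟩, ?_⟩
        · exact lt_of_le_of_ne (Nat.lt_succ_iff.mp i.isLt) (fun h => hine (Fin.ext h))
        · ext; rfl
      rw [hσeq]
      exact Finset.mem_insert_of_mem (Finset.mem_image_of_mem _ (Finset.mem_univ m))
  rw [Matrix.det_apply]
  rw [← Finset.sum_subset (Finset.subset_univ S) (by
    intro σ _ hσ
    obtain ⟨j, h1, h2, h3⟩ := key σ hσ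
    rw [Finset.prod_eq_zero (f := fun i => M (σ i) i) (Finset.mem_univ j)
      (h0 _ _ h1 h2 h3), smul_zero])]
  have hone_notmem : (1 : Equiv.Perm (Fin (k+1))) ∉
      (Finset.univ : Finset (Fin k)).image fun i => Equiv.swap i.castSucc (Fin.last k) := by
    simp only [Finset.mem_image, Finset.mem_univ, true_and]
    rintro ⟨i, hi⟩
    have := congrArg (fun σ : Equiv.Perm (Fin (k+1)) => σ (Fin.last k)) hi
    simp only [Equiv.swap_apply_right, Equiv.Perm.one_apply] at this
    exact (Fin.castSucc_lt_last i).ne this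
  rw [hS, Finset.sum_insert hone_notmem]
  rw [Finset.sum_image (by
    intro i _ j _ h
    have := congrArg (fun σ : Equiv.Perm (Fin (k+1)) => σ (Fin.last k)) h
    simp only [Equiv.swap_apply_right] at this
    exact Fin.castSucc_injective k this)]
  have hterm1 : (Equiv.Perm.sign (1 : Equiv.Perm (Fin (k+1)))) •
      ∏ j, M ((1 : Equiv.Perm (Fin (k+1))) j) j
      = (∏ i : Fin k, M i.castSucc i.castSucc) * M (Fin.last k) (Fin.last k) := by
    simp only [Equiv.Perm.sign_one, one_smul, Equiv.Perm.one_apply]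
    rw [Fin.prod_univ_castSucc]
  rw [hterm1]
  have hterm2 : ∀ i : Fin k,
      (Equiv.Perm.sign (Equiv.swap i.castSucc (Fin.last k))) •
        ∏ j, M (Equiv.swap i.castSucc (Fin.last k) j) j
      = -(M (Fin.last k) i.castSucc * M i.castSucc (Fin.last k) *
          ∏ j ∈ Finset.univ.erase i, M j.castSucc j.castSucc) := by
    intro i
    rw [Equiv.Perm.sign_swap (Fin.castSucc_lt_last i).ne]
    have hprod : ∏ j, M (Equiv.swap i.castSucc (Fin.last k) j) j
        = M (Fin.last k) i.castSucc * M i.castSucc (Fin.last k) *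
          ∏ j ∈ Finset.univ.erase i, M j.castSucc j.castSucc := by
      rw [Fin.prod_univ_castSucc]
      have h1 : ∀ j : Fin k, j ≠ i →
          M (Equiv.swap i.castSucc (Fin.last k) j.castSucc) j.castSucc
            = M j.castSucc j.castSucc := by
        intro j hj
        rw [Equiv.swap_apply_of_ne_of_ne (fun h => hj (Fin.castSucc_injective k h))
          (Fin.castSucc_lt_last j).ne]
      rw [← Finset.mul_prod_erase Finset.univ _ (Finset.mem_univ i)]
      rw [Equiv.swap_apply_left, Equiv.swap_apply_right,
        Finset.prod_congr rfl (fun j hj => h1 j (Finset.ne_of_mem_erase hj))]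
      ring
    rw [hprod]
    simp [Units.smul_def]
  rw [Finset.sum_congr rfl (fun i _ => hterm2 i), Finset.sum_neg_distrib, ← sub_eq_add_neg]


private lemma prod_neg_aux {ι : Type*} (s : Finset ι) (f : ι → ℝ) :
    ∏ j ∈ s, (-f j) = (-1) ^ #s * ∏ j ∈ s, f j := by
  calc ∏ j ∈ s, (-f j) = ∏ j ∈ s, ((-1) * f j) :=
        Finset.prod_congr rfl fun j _ => by ring
    _ = (∏ _j ∈ s, (-1 : ℝ)) * ∏ j ∈ s, f j := Finset.prod_mul_distrib
    _ = (-1) ^ #s * ∏ j ∈ s, f j := by rw [Finset.prod_const]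

lemma nondeg_poly (k : ℕ) (a : Fin (k + 1) → ℝ) (b : Fin k → ℝ)
    (hab : ∀ i : Fin k, b i ≤ a i.castSucc ∧ a i.succ ≤ b i)
    (hstrict : ∀ i : Fin k, b i < a i.castSucc ∧ a i.succ < b i) :
    ∃ c : Fin k → ℝ, (∀ i, 0 ≤ c i) ∧
      ∏ i, (X - C (a i)) =
        (X - C (∑ i, a i - ∑ i, b i)) * ∏ i, (X - C (b i)) -
          ∑ i, C (c i) * ∏ j ∈ univ.erase i, (X - C (b j)) := by
  classical
  -- antitonicity
  have ha : Antitone a := by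
    rw [Fin.antitone_iff_succ_le]
    intro i
    exact le_trans (hab i).2 (hab i).1
  have hb : StrictAnti b := by
    intro p q hpq
    have h1 : b q ≤ a q.castSucc := (hab q).1
    have h2 : a q.castSucc ≤ a p.succ := ha (by
      simp only [Fin.le_def, Fin.val_succ, Fin.coe_castSucc]
      exact hpq)
    exact lt_of_le_of_lt (le_trans h1 h2) (hstrict p).2
  set P : ℝ[X] := ∏ i, (X - C (a i)) with hP
  set Q : ℝ[X] := ∏ i, (X - C (b i)) with hQdef
  set w : ℝ := ∑ i, a i - ∑ i, b i with hw
  set D : Fin k → ℝ := fun i => ∏ j ∈ univ.erase i, (b i - b j) with hDdef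
  have hD : ∀ i, D i ≠ 0 := by
    intro i
    rw [hDdef]
    refine Finset.prod_ne_zero_iff.mpr fun j hj => ?_
    have hji : j ≠ i := Finset.ne_of_mem_erase hj
    rcases hji.lt_or_gt with h | h
    · exact sub_ne_zero.mpr (hb h).ne
    · exact sub_ne_zero.mpr (hb h).ne'
  set c : Fin k → ℝ := fun i => -(P.eval (b i)) / D i with hc
  refine ⟨c, ?_, ?_⟩
  · -- nonnegativity
    intro i
    have hPev : P.eval (b i) =
        (-1 : ℝ) ^ (#(univ.filter (fun j : Fin (k+1) => j ≤ i.castSucc))) *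
          ((∏ j ∈ univ.filter (fun j : Fin (k+1) => j ≤ i.castSucc), (a j - b i)) *
           (∏ j ∈ univ.filter (fun j : Fin (k+1) => ¬ j ≤ i.castSucc), (b i - a j))) := by
      rw [hP, eval_prod]
      simp only [eval_sub, eval_X, eval_C]
      rw [← Finset.prod_filter_mul_prod_filter_not univ (fun j : Fin (k+1) => j ≤ i.castSucc)]
      rw [show (∏ j ∈ univ.filter (fun j : Fin (k+1) => j ≤ i.castSucc), (b i - a j)) =
          ∏ j ∈ univ.filter (fun j : Fin (k+1) => j ≤ i.castSucc), -(a j - b i) by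
        apply Finset.prod_congr rfl; intro j _; ring]
      rw [prod_neg_aux]
      ring
    have hcard1 : #(univ.filter (fun j : Fin (k+1) => j ≤ i.castSucc)) = (i : ℕ) + 1 := by
      rw [show univ.filter (fun j : Fin (k+1) => j ≤ i.castSucc) = Finset.Iic i.castSucc by
        ext j; simp]
      rw [Fin.card_Iic]
      simp
    have hN1 : 0 ≤ ∏ j ∈ univ.filter (fun j : Fin (k+1) => j ≤ i.castSucc), (a j - b i) := by
      refine Finset.prod_nonneg fun j hj => ?_
      rw [Finset.mem_filter] at hj
      have : a i.castSucc ≤ a j := ha hj.2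
      linarith [(hab i).1]
    have hN2 : 0 ≤ ∏ j ∈ univ.filter (fun j : Fin (k+1) => ¬ j ≤ i.castSucc), (b i - a j) := by
      refine Finset.prod_nonneg fun j hj => ?_
      rw [Finset.mem_filter] at hj
      have hij : i.succ ≤ j := by
        have := hj.2
        simp only [not_le] at this
        rw [Fin.le_def, Fin.val_succ]
        rw [Fin.lt_def, Fin.coe_castSucc] at this
        omega
      have : a j ≤ a i.succ := ha hij
      linarith [(hab i).2]
    have hDev : D i =
        (-1 : ℝ) ^ (#((univ.erase i).filter (fun j => j < i))) *
          ((∏ j ∈ (univ.erase i).filter (fun j => j < i), (b j - b i)) *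
           (∏ j ∈ (univ.erase i).filter (fun j => ¬ j < i), (b i - b j))) := by
      show (∏ j ∈ univ.erase i, (b i - b j)) = _
      rw [← Finset.prod_filter_mul_prod_filter_not (univ.erase i) (fun j => j < i)]
      rw [show (∏ j ∈ (univ.erase i).filter (fun j => j < i), (b i - b j)) =
          ∏ j ∈ (univ.erase i).filter (fun j => j < i), -(b j - b i) by
        apply Finset.prod_congr rfl; intro j _; ring]
      rw [prod_neg_aux]
      ring
    have hcard2 : #((univ.erase i).filter (fun j => j < i)) = (i : ℕ) := by
      rw [show (univ.erase i).filter (fun j => j < i) = Finset.Iio i by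
        ext j
        simp only [Finset.mem_filter, Finset.mem_erase, Finset.mem_univ, and_true, true_and,
          Finset.mem_Iio]
        exact ⟨fun h => h.2, fun h => ⟨Fin.ne_of_lt h, h⟩⟩]
      exact Fin.card_Iio i
    have hM1 : 0 ≤ ∏ j ∈ (univ.erase i).filter (fun j => j < i), (b j - b i) := by
      refine Finset.prod_nonneg fun j hj => ?_
      rw [Finset.mem_filter] at hj
      linarith [hb hj.2]
    have hM2 : 0 ≤ ∏ j ∈ (univ.erase i).filter (fun j => ¬ j < i), (b i - b j) := by
      refine Finset.prod_nonneg fun j hj => ?_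
      rw [Finset.mem_filter] at hj
      have : i < j := lt_of_le_of_ne (not_lt.mp hj.2) (Ne.symm (Finset.ne_of_mem_erase hj.1))
      linarith [hb this]
    -- combine
    have hkey : 0 ≤ -(P.eval (b i)) * D i := by
      rw [hPev, hDev, hcard1, hcard2]
      have hpow : (-1 : ℝ) ^ ((i : ℕ) + 1) = (-1) * (-1) ^ (i : ℕ) := by
        rw [pow_succ]; ring
      rw [hpow]
      have h11 : ((-1 : ℝ) ^ (i : ℕ)) * ((-1 : ℝ) ^ (i : ℕ)) = 1 := by
        rw [← pow_add]
        exact Even.neg_one_pow ⟨i, rfl⟩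
      nlinarith [mul_nonneg (mul_nonneg hN1 hN2) (mul_nonneg hM1 hM2)]
    rw [hc]
    simp only
    rw [div_nonneg_iff]
    rcases (hD i).lt_or_gt with h | h
    · right
      constructor
      · nlinarith
      · linarith
    · left
      constructor
      · nlinarith
      · linarith
  · -- the polynomial identity
    have hInj : Set.InjOn b (univ : Finset (Fin k)) := fun p _ q _ h => hb.injective h
    set R : Fin k → ℝ[X] := fun i => ∏ j ∈ univ.erase i, (X - C (b j)) with hR
    set G : ℝ[X] := (X - C w) * Q - ∑ i, C (c i) * R i with hG
    show P = G
    set G2 : ℝ[X] := ∏ i : Fin (k+1), (X - C (Fin.snoc b w i)) with hG2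
    have hG2eq : (X - C w) * Q = G2 := by
      rw [hG2, Fin.prod_univ_castSucc]
      simp only [Fin.snoc_castSucc, Fin.snoc_last]
      rw [mul_comm, hQdef]
    have hMP : P.Monic := monic_prod_of_monic _ _ fun i _ => monic_X_sub_C _
    have hMG2 : G2.Monic := monic_prod_of_monic _ _ fun i _ => monic_X_sub_C _
    have hPdeg : P.natDegree = k + 1 := by
      rw [hP, natDegree_prod _ _ (fun i _ => X_sub_C_ne_zero (a i))]
      simp [natDegree_X_sub_C]
    have hG2deg : G2.natDegree = k + 1 := by
      rw [hG2, natDegree_prod _ _ (fun i _ => X_sub_C_ne_zero _)]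
      simp [natDegree_X_sub_C]
    have hsnoc : ∑ i : Fin (k+1), Fin.snoc b w i = ∑ i, a i := by
      rw [Fin.sum_univ_castSucc]
      simp only [Fin.snoc_castSucc, Fin.snoc_last]
      rw [hw]
      ring
    have hnc : P.nextCoeff = G2.nextCoeff := by
      rw [hP, hG2, prod_X_sub_C_nextCoeff, prod_X_sub_C_nextCoeff, hsnoc]
    have hdeg1 : (P - G2).degree < ((k : ℕ) : WithBot ℕ) := by
      rw [degree_lt_iff_coeff_zero]
      intro m hm
      have hm' : k ≤ m := by exact_mod_cast hm
      rw [coeff_sub]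
      rcases eq_or_lt_of_le hm' with heq | hlt
      · have e1 : P.coeff m = P.nextCoeff := by
          rw [nextCoeff_of_natDegree_pos (by omega), hPdeg, ← heq]
          norm_num
        have e2 : G2.coeff m = G2.nextCoeff := by
          rw [nextCoeff_of_natDegree_pos (by omega), hG2deg, ← heq]
          norm_num
        rw [e1, e2, hnc, sub_self]
      · rcases eq_or_lt_of_le (Nat.succ_le_of_lt hlt) with hm2 | hm2
        · have e1 : P.coeff m = 1 := by
            have h := hMP.coeff_natDegree
            rw [hPdeg] at h
            rw [show m = k + 1 by omega]
            exact h
          have e2 : G2.coeff m = 1 := by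
            have h := hMG2.coeff_natDegree
            rw [hG2deg] at h
            rw [show m = k + 1 by omega]
            exact h
          rw [e1, e2, sub_self]
        · rw [coeff_eq_zero_of_natDegree_lt (by omega),
            coeff_eq_zero_of_natDegree_lt (by omega), sub_self]
    have hdegS : ∀ i : Fin k, (C (c i) * R i).degree < ((k : ℕ) : WithBot ℕ) := by
      intro i
      refine lt_of_le_of_lt (degree_le_natDegree) ?_
      rw [Nat.cast_lt]
      have h1 : (C (c i) * R i).natDegree ≤ 0 + (R i).natDegree := by
        refine le_trans (natDegree_mul_le) ?_
        simp [natDegree_C]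
      have h2 : (R i).natDegree = k - 1 := by
        rw [hR]
        simp only
        rw [natDegree_prod _ _ (fun j _ => X_sub_C_ne_zero _)]
        simp [natDegree_X_sub_C, Finset.card_erase_of_mem]
      have hk : 1 ≤ k := Nat.one_le_iff_ne_zero.mpr (by
        rintro rfl; exact absurd i.2 (by omega))
      omega
    have hdeg : (P - G).degree < ((#(univ : Finset (Fin k)) : ℕ) : WithBot ℕ) := by
      have hcard : #(univ : Finset (Fin k)) = k := by simp
      rw [hcard]
      have hPG : P - G = (P - G2) + ∑ i, C (c i) * R i := by
        rw [hG, ← hG2eq]; ring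
      rw [hPG]
      refine lt_of_le_of_lt (degree_add_le _ _) (max_lt hdeg1 ?_)
      refine lt_of_le_of_lt (degree_sum_le _ _) ?_
      rw [Finset.sup_lt_iff (WithBot.bot_lt_coe _)]
      exact fun i _ => hdegS i
    refine Polynomial.eq_of_degree_sub_lt_of_eval_index_eq univ hInj hdeg ?_
    intro m _
    have hQev : Q.eval (b m) = 0 := by
      rw [hQdef, eval_prod]
      refine Finset.prod_eq_zero (Finset.mem_univ m) ?_
      simp
    have hRev : ∀ i : Fin k, i ≠ m → (R i).eval (b m) = 0 := by
      intro i him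
      rw [hR]
      simp only
      rw [eval_prod]
      refine Finset.prod_eq_zero (Finset.mem_erase.mpr ⟨him.symm, Finset.mem_univ m⟩) ?_
      simp
    have hRm : (R m).eval (b m) = D m := by
      rw [hR, hDdef]
      simp only
      rw [eval_prod]
      exact Finset.prod_congr rfl fun j _ => by simp
    have hsum : ∑ i, (C (c i) * R i).eval (b m) = c m * D m := by
      rw [Finset.sum_eq_single m]
      · simp [hRm]
      · intro i _ him
        simp [hRev i him]
      · intro h; exact absurd (Finset.mem_univ m) h
    have hcD : c m * D m = -(P.eval (b m)) := by
      rw [hc]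
      simp only
      exact div_mul_cancel₀ _ (hD m)
    rw [hG]
    rw [eval_sub, eval_mul, hQev, mul_zero, eval_finset_sum, hsum, hcD]
    ring

lemma lift_solution (k : ℕ) (a : Fin (k + 2) → ℝ) (b : Fin (k + 1) → ℝ)
    (i : Fin (k + 1)) (j : Fin (k + 2)) (haj : a j = b i)
    (c' : Fin k → ℝ) (hnn : ∀ n, 0 ≤ c' n)
    (heq : ∏ n, (X - C (a (j.succAbove n))) =
      (X - C (∑ n, a (j.succAbove n) - ∑ n, b (i.succAbove n))) *
          ∏ n, (X - C (b (i.succAbove n))) -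
        ∑ n, C (c' n) * ∏ m ∈ univ.erase n, (X - C (b (i.succAbove m)))) :
    ∃ c : Fin (k + 1) → ℝ, (∀ n, 0 ≤ c n) ∧
      ∏ n, (X - C (a n)) =
        (X - C (∑ n, a n - ∑ n, b n)) * ∏ n, (X - C (b n)) -
          ∑ n, C (c n) * ∏ m ∈ univ.erase n, (X - C (b m)) := by
  classical
  set c : Fin (k + 1) → ℝ := i.insertNth 0 c' with hcdef
  have hci : c i = 0 := by rw [hcdef]; simp
  have hcs : ∀ n : Fin k, c (i.succAbove n) = c' n := by
    intro n; rw [hcdef]; simp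
  refine ⟨c, ?_, ?_⟩
  · intro n
    refine Fin.succAboveCases (α := fun n => (0:ℝ) ≤ c n) i ?_ (fun m => ?_) n
    · show 0 ≤ c i
      rw [hci]
    · show 0 ≤ c (i.succAbove m)
      rw [hcs m]; exact hnn m
  · have hw : ∑ n, a n - ∑ n, b n
        = ∑ n, a (j.succAbove n) - ∑ n, b (i.succAbove n) := by
      rw [Fin.sum_univ_succAbove a j, Fin.sum_univ_succAbove b i, haj]
      ring_nf
    have hRlift : ∀ n : Fin k,
        (∏ m ∈ univ.erase (i.succAbove n), (X - C (b m)))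
          = (X - C (b i)) * ∏ m ∈ univ.erase n, (X - C (b (i.succAbove m))) := by
      intro n
      have hcancel : (X - C (b (i.succAbove n))) *
            ∏ m ∈ univ.erase (i.succAbove n), (X - C (b m))
          = (X - C (b (i.succAbove n))) *
            ((X - C (b i)) * ∏ m ∈ univ.erase n, (X - C (b (i.succAbove m)))) := by
        rw [Finset.mul_prod_erase univ (fun m => X - C (b m)) (Finset.mem_univ (i.succAbove n))]
        rw [Fin.prod_univ_succAbove (fun m => X - C (b m)) i]
        rw [← Finset.mul_prod_erase univ (fun m => X - C (b (i.succAbove m)))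
          (Finset.mem_univ n)]
        ring
      exact mul_left_cancel₀ (X_sub_C_ne_zero _) hcancel
    rw [Fin.prod_univ_succAbove (fun n => X - C (a n)) j,
      Fin.prod_univ_succAbove (fun n => X - C (b n)) i,
      Fin.sum_univ_succAbove (fun n => C (c n) * ∏ m ∈ univ.erase n, (X - C (b m))) i,
      hci, hw, haj]
    have hsum : ∑ n : Fin k, C (c (i.succAbove n)) *
          ∏ m ∈ univ.erase (i.succAbove n), (X - C (b m))
        = (X - C (b i)) *
            ∑ n : Fin k, C (c' n) * ∏ m ∈ univ.erase n, (X - C (b (i.succAbove m))) := by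
      rw [Finset.mul_sum]
      refine Finset.sum_congr rfl fun n _ => ?_
      rw [hcs n, hRlift n]
      ring
    rw [hsum]
    simp only [map_zero, zero_mul, zero_add]
    linear_combination (X - C (b i)) * heq

lemma exists_coeffs : ∀ (k : ℕ) (a : Fin (k + 1) → ℝ) (b : Fin k → ℝ),
    (∀ i : Fin k, b i ≤ a i.castSucc ∧ a i.succ ≤ b i) →
    ∃ c : Fin k → ℝ, (∀ i, 0 ≤ c i) ∧
      ∏ i, (X - C (a i)) =
        (X - C (∑ i, a i - ∑ i, b i)) * ∏ i, (X - C (b i)) -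
          ∑ i, C (c i) * ∏ j ∈ univ.erase i, (X - C (b j)) := by
  intro k
  induction k with
  | zero => exact fun a b hab => nondeg_poly 0 a b hab (fun i => i.elim0)
  | succ k ih =>
    intro a b hab
    by_cases Hdeg : ∃ i : Fin (k + 1), a i.castSucc = b i ∨ a i.succ = b i
    · obtain ⟨i, hi⟩ := Hdeg
      have hbA : Antitone b := by
        rw [Fin.antitone_iff_succ_le]
        intro m
        calc b m.succ ≤ a (m.succ).castSucc := (hab m.succ).1
          _ = a (m.castSucc).succ := by rw [Fin.succ_castSucc]
          _ ≤ b m.castSucc := (hab m.castSucc).2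
      rcases hi with hi | hi
      · -- remove a at i.castSucc
        have hab' : ∀ m : Fin k, b (i.succAbove m) ≤ a ((i.castSucc).succAbove m.castSucc) ∧
            a ((i.castSucc).succAbove m.succ) ≤ b (i.succAbove m) := by
          intro m
          rcases lt_or_ge m.castSucc i with h | h
          · have e1 : i.succAbove m = m.castSucc := Fin.succAbove_of_castSucc_lt _ _ h
            have e2 : (i.castSucc).succAbove m.castSucc = m.castSucc.castSucc :=
              Fin.succAbove_of_castSucc_lt _ _ (by rwa [Fin.castSucc_lt_castSucc_iff])
            constructor
            · rw [e1, e2]; exact (hab m.castSucc).1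
            · rcases lt_or_ge m.succ i with h2 | h2
              · have e3 : (i.castSucc).succAbove m.succ = m.succ.castSucc :=
                  Fin.succAbove_of_castSucc_lt _ _ (by rwa [Fin.castSucc_lt_castSucc_iff])
                rw [e1, e3, ← Fin.succ_castSucc]
                exact (hab m.castSucc).2
              · have e3 : (i.castSucc).succAbove m.succ = m.succ.succ :=
                  Fin.succAbove_of_le_castSucc _ _ (by rwa [Fin.castSucc_le_castSucc_iff])
                rw [e1, e3]
                calc a m.succ.succ ≤ b m.succ := (hab m.succ).2
                  _ ≤ b m.castSucc := hbA (Fin.castSucc_le_succ m)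
          · have e1 : i.succAbove m = m.succ := Fin.succAbove_of_le_castSucc _ _ h
            have e2 : (i.castSucc).succAbove m.castSucc = m.castSucc.succ :=
              Fin.succAbove_of_le_castSucc _ _ (by rwa [Fin.castSucc_le_castSucc_iff])
            have e3 : (i.castSucc).succAbove m.succ = m.succ.succ :=
              Fin.succAbove_of_le_castSucc _ _ (by
                simp only [Fin.le_def, Fin.coe_castSucc, Fin.val_succ] at h ⊢
                omega)
            constructor
            · rw [e1, e2, Fin.succ_castSucc]; exact (hab m.succ).1
            · rw [e1, e3]; exact (hab m.succ).2
        obtain ⟨c', hnn, heq⟩ := ih (fun n => a ((i.castSucc).succAbove n))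
          (fun n => b (i.succAbove n)) hab'
        exact lift_solution k a b i i.castSucc hi c' hnn heq
      · -- remove a at i.succ
        have hab' : ∀ m : Fin k, b (i.succAbove m) ≤ a ((i.succ).succAbove m.castSucc) ∧
            a ((i.succ).succAbove m.succ) ≤ b (i.succAbove m) := by
          intro m
          rcases lt_or_ge m.castSucc i with h | h
          · have e1 : i.succAbove m = m.castSucc := Fin.succAbove_of_castSucc_lt _ _ h
            have e2 : (i.succ).succAbove m.castSucc = m.castSucc.castSucc :=
              Fin.succAbove_of_castSucc_lt _ _ (by
                simp only [Fin.lt_def, Fin.coe_castSucc, Fin.val_succ] at h ⊢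
                omega)
            have e3 : (i.succ).succAbove m.succ = m.succ.castSucc :=
              Fin.succAbove_of_castSucc_lt _ _ (by
                simp only [Fin.lt_def, Fin.coe_castSucc, Fin.val_succ] at h ⊢
                omega)
            constructor
            · rw [e1, e2]; exact (hab m.castSucc).1
            · rw [e1, e3, ← Fin.succ_castSucc]; exact (hab m.castSucc).2
          · have e1 : i.succAbove m = m.succ := Fin.succAbove_of_le_castSucc _ _ h
            have e3 : (i.succ).succAbove m.succ = m.succ.succ :=
              Fin.succAbove_of_le_castSucc _ _ (by
                simp only [Fin.le_def, Fin.coe_castSucc, Fin.val_succ] at h ⊢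
                omega)
            rcases eq_or_lt_of_le h with heq2 | hlt
            · have e2 : (i.succ).succAbove m.castSucc = m.castSucc.castSucc :=
                Fin.succAbove_of_castSucc_lt _ _ (by
                  rw [heq2]
                  exact Fin.castSucc_lt_succ)
              constructor
              · rw [e1, e2]
                calc b m.succ ≤ a (m.succ).castSucc := (hab m.succ).1
                  _ = a (m.castSucc).succ := by rw [Fin.succ_castSucc]
                  _ = a i.succ := by rw [heq2]
                  _ = b i := hi
                  _ = b m.castSucc := by rw [heq2]
                  _ ≤ a m.castSucc.castSucc := (hab m.castSucc).1
              · rw [e1, e3]; exact (hab m.succ).2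
            · have e2 : (i.succ).succAbove m.castSucc = m.castSucc.succ :=
                Fin.succAbove_of_le_castSucc _ _ (by
                  simp only [Fin.lt_def, Fin.le_def, Fin.coe_castSucc, Fin.val_succ] at hlt ⊢
                  omega)
              constructor
              · rw [e1, e2, Fin.succ_castSucc]; exact (hab m.succ).1
              · rw [e1, e3]; exact (hab m.succ).2
        obtain ⟨c', hnn, heq⟩ := ih (fun n => a ((i.succ).succAbove n))
          (fun n => b (i.succAbove n)) hab'
        exact lift_solution k a b i i.succ hi c' hnn heq
    · push_neg at Hdeg
      refine nondeg_poly (k + 1) a b hab fun i => ?_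
      obtain ⟨h1, h2⟩ := Hdeg i
      exact ⟨lt_of_le_of_ne (hab i).1 (Ne.symm h1), lt_of_le_of_ne (hab i).2 h2⟩

end Aux

/-- Given interlacing real numbers `a₁ ≥ b₁ ≥ a₂ ≥ … ≥ a_k ≥ b_k ≥ a_{k+1}`, there exist
complex numbers `z₁, …, z_k` and a real `z_{k+1}` such that the corresponding Hermitian
arrow matrix has eigenvalues exactly `a₁, …, a_{k+1}` with multiplicity. -/
theorem stmt4 (k : ℕ) (a : Fin (k + 1) → ℝ) (b : Fin k → ℝ)
    (hab : ∀ i : Fin k, b i ≤ a i.castSucc ∧ a i.succ ≤ b i) :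
    ∃ (z : Fin k → ℂ) (w : ℝ),
      (arrowMatrix b z w).charpoly = ∏ i : Fin (k + 1), (X - C ((a i : ℝ) : ℂ)) := by
  classical
  obtain ⟨c, hnn, heq⟩ := exists_coeffs k a b hab
  set z : Fin k → ℂ := fun i => ((Real.sqrt (c i) : ℝ) : ℂ) with hz
  refine ⟨z, ∑ i, a i - ∑ i, b i, ?_⟩
  set w : ℝ := ∑ i, a i - ∑ i, b i with hw
  set M : Matrix (Fin (k + 1)) (Fin (k + 1)) ℂ := arrowMatrix b z w with hMdef
  have hne_last : ∀ i : Fin (k + 1), i ≠ Fin.last k → (i : ℕ) < k := by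
    intro i hi
    have h1 : (i : ℕ) < k + 1 := i.isLt
    have h2 : (i : ℕ) ≠ k := fun h => hi (Fin.ext (by rw [h]; rfl))
    omega
  have hlast_not : ¬ ((Fin.last k : Fin (k + 1)) : ℕ) < k := by simp
  have h0 : ∀ p q : Fin (k + 1), p ≠ q → p ≠ Fin.last k → q ≠ Fin.last k →
      Matrix.charmatrix M p q = 0 := by
    intro p q hpq hp hq
    rw [Matrix.charmatrix_apply_ne _ _ _ hpq]
    have hMz : M p q = 0 := by
      show arrowMatrix b z w p q = 0
      unfold arrowMatrix
      rw [dif_pos (hne_last p hp), dif_pos (hne_last q hq), if_neg hpq]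
    rw [hMz, map_zero, neg_zero]
  have hdet := arrow_det (Matrix.charmatrix M) h0
  have hdiag : ∀ i : Fin k, M i.castSucc i.castSucc = ((b i : ℝ) : ℂ) := by
    intro i
    show arrowMatrix b z w i.castSucc i.castSucc = _
    unfold arrowMatrix
    have hik : ((i.castSucc : Fin (k + 1)) : ℕ) < k := by simpa using i.isLt
    rw [dif_pos hik, dif_pos hik, if_pos rfl]
    simp
  have hlastlast : M (Fin.last k) (Fin.last k) = ((w : ℝ) : ℂ) := by
    show arrowMatrix b z w _ _ = _
    unfold arrowMatrix
    rw [dif_neg hlast_not, dif_neg hlast_not]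
  have hrow : ∀ i : Fin k, M (Fin.last k) i.castSucc = z i := by
    intro i
    show arrowMatrix b z w _ _ = _
    unfold arrowMatrix
    have hik : ((i.castSucc : Fin (k + 1)) : ℕ) < k := by simpa using i.isLt
    rw [dif_neg hlast_not, dif_pos hik]
    simp
  have hcol : ∀ i : Fin k, M i.castSucc (Fin.last k) = (starRingEnd ℂ) (z i) := by
    intro i
    show arrowMatrix b z w _ _ = _
    unfold arrowMatrix
    have hik : ((i.castSucc : Fin (k + 1)) : ℕ) < k := by simpa using i.isLt
    rw [dif_pos hik, dif_neg hlast_not]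
    simp
  have h1 : ∏ i : Fin k, Matrix.charmatrix M i.castSucc i.castSucc
      = ∏ i : Fin k, (X - C ((b i : ℝ) : ℂ)) :=
    Finset.prod_congr rfl fun i _ => by rw [Matrix.charmatrix_apply_eq, hdiag i]
  have h2 : Matrix.charmatrix M (Fin.last k) (Fin.last k) = X - C ((w : ℝ) : ℂ) := by
    rw [Matrix.charmatrix_apply_eq, hlastlast]
  have h3 : ∀ i : Fin k, Matrix.charmatrix M (Fin.last k) i.castSucc *
      Matrix.charmatrix M i.castSucc (Fin.last k) = C (((c i : ℝ)) : ℂ) := by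
    intro i
    rw [Matrix.charmatrix_apply_ne _ _ _ (Fin.castSucc_lt_last i).ne',
      Matrix.charmatrix_apply_ne _ _ _ (Fin.castSucc_lt_last i).ne, hrow i, hcol i,
      neg_mul_neg, ← map_mul]
    congr 1
    rw [hz]
    simp only [Complex.conj_ofReal, ← Complex.ofReal_mul]
    rw [Real.mul_self_sqrt (hnn i)]
  have h4 : ∀ i : Fin k, ∏ j ∈ Finset.univ.erase i, Matrix.charmatrix M j.castSucc j.castSucc
      = ∏ j ∈ Finset.univ.erase i, (X - C ((b j : ℝ) : ℂ)) := fun i =>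
    Finset.prod_congr rfl fun j _ => by rw [Matrix.charmatrix_apply_eq, hdiag j]
  have hsum : ∑ i : Fin k, Matrix.charmatrix M (Fin.last k) i.castSucc *
        Matrix.charmatrix M i.castSucc (Fin.last k) *
        ∏ j ∈ Finset.univ.erase i, Matrix.charmatrix M j.castSucc j.castSucc
      = ∑ i : Fin k, C (((c i : ℝ)) : ℂ) * ∏ j ∈ Finset.univ.erase i, (X - C ((b j : ℝ) : ℂ)) :=
    Finset.sum_congr rfl fun i _ => by rw [h3 i, h4 i]
  have hmap := congrArg (Polynomial.map (algebraMap ℝ ℂ)) heq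
  simp only [Polynomial.map_prod, Polynomial.map_sub, Polynomial.map_mul, Polynomial.map_sum,
    Polynomial.map_X, Polynomial.map_C, Complex.coe_algebraMap] at hmap
  show (Matrix.charmatrix M).det = _
  rw [hdet, h1, h2, hsum, hmap]
  ring
end

section
/- Let a_1 > b_1 > a_2 > b_2 > … > a_k > b_k > a_{k+1} be strictly interlacing real numbers and let Z(z) be the (k+1)×(k+1) Hermitian matrix with diagonal b_1,…,b_k,z_{k+1}, off-diagonal last column \bar{z}_1,…,\bar{z}_k and last row z_1,…,z_k, where z_{k+1} = Σ_{i=1}^{k+1} a_i − Σ_{i=1}^{k} b_i. Then there exist unique positive real numbers δ_1,…,δ_k such that Z(z) has eigenvalues a_1,…,a_{k+1} if and only if |z_i|² = δ_i for all i. In particular the set of such (z_1,…,z_k) ∈ ℂᵏ is a real k-torus. -/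
open Polynomial

open Matrix Finset

section Arrow

variable {R : Type*} [CommRing R]

/-- General arrow matrix over a commutative ring. -/
def arrAux {k : ℕ} (d c r : Fin k → R) (e : R) :
    Matrix (Fin (k + 1)) (Fin (k + 1)) R := fun i j =>
  if hik : (i : ℕ) < k then
    if _hjk : (j : ℕ) < k then
      if i = j then d ⟨(i : ℕ), hik⟩ else 0
    else c ⟨(i : ℕ), hik⟩
  else
    if hjk : (j : ℕ) < k then r ⟨(j : ℕ), hjk⟩ else e

lemma prod_erase_eq {n : ℕ} (d : Fin n → R) (s : Fin n) :
    ∏ j ∈ univ.erase s, d j = ∏ j, if j = s then 1 else d j := by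
  rw [← Finset.mul_prod_erase univ (fun j => if j = s then 1 else d j) (mem_univ s)]
  rw [if_pos rfl, one_mul]
  exact Finset.prod_congr rfl fun j hj => by
    rw [if_neg (Finset.ne_of_mem_erase hj)]

lemma arrAux_det : ∀ (k : ℕ) (d c r : Fin k → R) (e : R),
    (arrAux d c r e).det =
      e * ∏ i, d i - ∑ i, r i * c i * ∏ j ∈ univ.erase i, d j := by
  intro k
  induction k with
  | zero =>
    intro d c r e
    simp [arrAux, Matrix.det_fin_one]
  | succ m ih =>
    intro d c r e
    rw [Matrix.det_succ_row_zero]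
    have h0 : ∀ j : Fin (m + 2), (arrAux d c r e) 0 j =
        if j = 0 then d 0 else if j = Fin.last (m + 1) then c 0 else 0 := by
      intro j
      rcases eq_or_ne j 0 with rfl | hj0
      · simp [arrAux]
      rcases eq_or_ne j (Fin.last (m + 1)) with rfl | hjl
      · have : ¬ ((Fin.last (m+1) : Fin (m+2)) : ℕ) < m + 1 := by simp
        simp [arrAux, this, hj0]
      · have hjk : ((j : Fin (m+2)) : ℕ) < m + 1 := Fin.lt_last_iff_ne_last.mpr hjl
        have : (0 : Fin (m+2)) ≠ j := fun h => hj0 h.symm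
        simp [arrAux, hjk, this, hj0, hjl]
    have hlast0 : (Fin.last (m+1) : Fin (m+2)) ≠ 0 := by
      simp [Fin.ext_iff]
    rw [Finset.sum_eq_add_of_mem 0 (Fin.last (m+1)) (mem_univ _) (mem_univ _) hlast0.symm
      (by
        intro x _ hx
        rw [h0 x, if_neg hx.1, if_neg hx.2]
        ring)]
    -- minor at column 0
    have hminor0 : (arrAux d c r e).submatrix Fin.succ ((0 : Fin (m+2)).succAbove) =
        arrAux (fun i => d i.succ) (fun i => c i.succ) (fun i => r i.succ) e := by
      ext i j
      simp only [submatrix_apply, Fin.succAbove_zero]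
      unfold arrAux
      by_cases hi : (i : ℕ) < m
      · have hi' : ((i.succ : Fin (m+2)) : ℕ) < m + 1 := Nat.succ_lt_succ hi
        by_cases hj : (j : ℕ) < m
        · have hj' : ((j.succ : Fin (m+2)) : ℕ) < m + 1 := Nat.succ_lt_succ hj
          rw [dif_pos hi', dif_pos hj', dif_pos hi, dif_pos hj]
          by_cases hij : i = j
          · subst hij
            rw [if_pos rfl, if_pos rfl]
            congr 1
          · rw [if_neg (fun h => hij (Fin.succ_inj.mp h)), if_neg hij]
        · have hj' : ¬ ((j.succ : Fin (m+2)) : ℕ) < m + 1 := fun h =>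
            hj (Nat.lt_of_succ_lt_succ h)
          rw [dif_pos hi', dif_neg hj', dif_pos hi, dif_neg hj]
          congr 1
      · have hi' : ¬ ((i.succ : Fin (m+2)) : ℕ) < m + 1 := fun h =>
          hi (Nat.lt_of_succ_lt_succ h)
        by_cases hj : (j : ℕ) < m
        · have hj' : ((j.succ : Fin (m+2)) : ℕ) < m + 1 := Nat.succ_lt_succ hj
          rw [dif_neg hi', dif_pos hj', dif_neg hi, dif_pos hj]
          congr 1
        · have hj' : ¬ ((j.succ : Fin (m+2)) : ℕ) < m + 1 := fun h =>
            hj (Nat.lt_of_succ_lt_succ h)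
          rw [dif_neg hi', dif_neg hj', dif_neg hi, dif_neg hj]
    -- column-0 entries of the minor at the last column
    have hcol : ∀ i : Fin (m+1), arrAux d c r e i.succ 0 =
        if i = Fin.last m then r 0 else (0 : R) := by
      intro i
      unfold arrAux
      by_cases hi : (i : ℕ) < m
      · have hi' : ((i.succ : Fin (m+2)) : ℕ) < m + 1 := Nat.succ_lt_succ hi
        have h00 : (((0 : Fin (m+2))) : ℕ) < m + 1 := by simp
        rw [dif_pos hi', dif_pos h00, if_neg (Fin.succ_ne_zero i),
          if_neg (by simp [Fin.ext_iff]; omega)]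
      · have hi' : ¬ ((i.succ : Fin (m+2)) : ℕ) < m + 1 := fun h =>
          hi (Nat.lt_of_succ_lt_succ h)
        have h00 : (((0 : Fin (m+2))) : ℕ) < m + 1 := by simp
        rw [dif_neg hi', dif_pos h00, if_pos (by simp [Fin.ext_iff]; omega)]
        congr 1
    -- minor at last column has determinant (-1)^m * r 0 * ∏ d i.succ
    have hminorlast :
        det ((arrAux d c r e).submatrix Fin.succ ((Fin.last (m+1)).succAbove)) =
          (-1) ^ m * r 0 * ∏ i : Fin m, d i.succ := by
      rw [Matrix.det_succ_column_zero]
      rw [Finset.sum_eq_single_of_mem (Fin.last m) (mem_univ _)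
        (by
          intro x _ hx
          simp only [submatrix_apply, Fin.succAbove_last, Fin.castSucc_zero]
          rw [hcol x, if_neg hx]
          ring)]
      simp only [submatrix_apply, Fin.succAbove_last, Fin.castSucc_zero]
      rw [hcol (Fin.last m), if_pos rfl]
      have hdiag : (((arrAux d c r e).submatrix Fin.succ Fin.castSucc).submatrix
            Fin.castSucc Fin.succ) = Matrix.diagonal (fun i : Fin m => d i.succ) := by
        ext i j
        simp only [submatrix_apply]
        unfold arrAux
        have hi' : (((i.castSucc.succ : Fin (m+2)) : ℕ)) < m + 1 := by
          simp
        have hj' : (((j.succ.castSucc : Fin (m+2)) : ℕ)) < m + 1 := by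
          simp
        rw [dif_pos hi', dif_pos hj']
        by_cases hij : i = j
        · subst hij
          rw [if_pos (by simp [Fin.ext_iff]), Matrix.diagonal_apply_eq]
          congr 1
        · rw [if_neg (by simp [Fin.ext_iff]; exact fun h => hij (Fin.ext h)),
            Matrix.diagonal_apply_ne _ hij]
      rw [hdiag, Matrix.det_diagonal]
      simp only [Fin.val_last]
    rw [hminor0, hminorlast, ih]
    rw [h0 0, if_pos rfl, h0 (Fin.last (m+1)), if_neg hlast0, if_pos rfl]
    have hlastval : ((Fin.last (m+1) : Fin (m+2)) : ℕ) = m + 1 := rfl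
    rw [hlastval]
    simp only [Fin.val_zero, pow_zero, one_mul]
    rw [Fin.prod_univ_succ d, Fin.sum_univ_succ
      (fun i : Fin (m+1) => r i * c i * ∏ j ∈ univ.erase i, d j)]
    have he0 : ∏ j ∈ (univ : Finset (Fin (m+1))).erase 0, d j = ∏ i : Fin m, d i.succ := by
      rw [prod_erase_eq, Fin.prod_univ_succ]
      simp [Fin.succ_ne_zero]
    have hesucc : ∀ i : Fin m, ∏ j ∈ (univ : Finset (Fin (m+1))).erase i.succ, d j =
        d 0 * ∏ j ∈ (univ : Finset (Fin m)).erase i, d j.succ := by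
      intro i
      rw [prod_erase_eq, prod_erase_eq, Fin.prod_univ_succ]
      simp [eq_comm (a := (0 : Fin (m+1))), Fin.succ_ne_zero, Fin.succ_inj]
    rw [he0]
    have hRHSsum : ∑ i : Fin m, r i.succ * c i.succ * ∏ j ∈ univ.erase i.succ, d j
        = d 0 * ∑ i : Fin m, r i.succ * c i.succ * ∏ j ∈ univ.erase i, d j.succ := by
      rw [Finset.mul_sum]
      exact Finset.sum_congr rfl fun i _ => by rw [hesucc i]; ring
    rw [hRHSsum]
    have hsign : ((-1 : R)) ^ (m + 1) * (-1 : R) ^ m = -1 := by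
      rw [← pow_add]
      have h2 : m + 1 + m = 2 * m + 1 := by ring
      rw [h2, pow_succ, pow_mul]
      norm_num
    have hbeta : ∑ i : Fin m, (fun i => r i.succ) i * (fun i => c i.succ) i *
        ∏ j ∈ univ.erase i, (fun i => d i.succ) j
        = ∑ i : Fin m, r i.succ * c i.succ * ∏ j ∈ univ.erase i, d j.succ := rfl
    rw [hbeta]
    linear_combination (c 0 * (r 0 * ∏ i : Fin m, d i.succ)) * hsign

end Arrow

lemma arrow_charmatrix {k : ℕ} (b : Fin k → ℝ) (z : Fin k → ℂ) (w : ℝ) :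
    charmatrix (arrowMatrix b z w) =
      arrAux (fun i => X - C ((b i : ℝ) : ℂ)) (fun i => -C ((starRingEnd ℂ) (z i)))
        (fun i => -C (z i)) (X - C ((w : ℝ) : ℂ)) := by
  apply Matrix.ext
  intro i j
  rcases eq_or_ne i j with rfl | hij
  · rw [charmatrix_apply_eq]
    unfold arrowMatrix arrAux
    by_cases hi : (i : ℕ) < k
    · simp [hi]
    · simp [hi]
  · rw [charmatrix_apply_ne _ _ _ hij]
    unfold arrowMatrix arrAux
    by_cases hi : (i : ℕ) < k
    · by_cases hj : (j : ℕ) < k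
      · simp [hi, hj, hij]
      · simp [hi, hj]
    · by_cases hj : (j : ℕ) < k
      · simp [hi, hj]
      · exact absurd (Fin.ext (by omega : (i : ℕ) = (j : ℕ))) hij

lemma arrow_charpoly {k : ℕ} (b : Fin k → ℝ) (z : Fin k → ℂ) (w : ℝ) :
    (arrowMatrix b z w).charpoly =
      (X - C ((w : ℝ) : ℂ)) * ∏ i, (X - C ((b i : ℝ) : ℂ)) -
        ∑ i, C ((Complex.normSq (z i) : ℝ) : ℂ) *
          ∏ j ∈ univ.erase i, (X - C ((b j : ℝ) : ℂ)) := by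
  rw [Matrix.charpoly, arrow_charmatrix, arrAux_det]
  congr 1
  refine Finset.sum_congr rfl fun i _ => ?_
  rw [neg_mul_neg, ← _root_.map_mul, Complex.mul_conj]

lemma keyPoly {k : ℕ} (a : Fin (k + 1) → ℝ) (b : Fin k → ℝ) (hbinj : Function.Injective b)
    (t : Fin k → ℝ) :
    ((X - C (((∑ i, a i) - ∑ i, b i : ℝ) : ℂ)) * ∏ i, (X - C ((b i : ℝ) : ℂ)) -
        ∑ i, C ((t i : ℝ) : ℂ) * ∏ j ∈ univ.erase i, (X - C ((b j : ℝ) : ℂ)) =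
        ∏ i : Fin (k + 1), (X - C ((a i : ℝ) : ℂ))) ↔
      ∀ m, t m * ∏ j ∈ univ.erase m, (b m - b j) = - ∏ i, (b m - a i) := by
  have hevalQ1 : ∀ m : Fin k,
      eval ((b m : ℝ) : ℂ) ((X - C (((∑ i, a i) - ∑ i, b i : ℝ) : ℂ)) *
        ∏ i, (X - C ((b i : ℝ) : ℂ))) = 0 := by
    intro m
    rw [eval_mul, eval_prod, Finset.prod_eq_zero (mem_univ m) (by simp), mul_zero]
  have hevalS : ∀ m : Fin k,
      eval ((b m : ℝ) : ℂ) (∑ i, C ((t i : ℝ) : ℂ) *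
          ∏ j ∈ univ.erase i, (X - C ((b j : ℝ) : ℂ))) =
        ((t m * ∏ j ∈ univ.erase m, (b m - b j) : ℝ) : ℂ) := by
    intro m
    rw [eval_finset_sum]
    rw [Finset.sum_eq_single m]
    · rw [eval_mul, eval_C, eval_prod]
      push_cast
      refine congrArg _ (Finset.prod_congr rfl fun j _ => ?_)
      simp
    · intro i _ him
      rw [eval_mul, eval_prod,
        Finset.prod_eq_zero (Finset.mem_erase.mpr ⟨Ne.symm him, mem_univ m⟩) (by simp),
        mul_zero]
    · intro h
      exact absurd (mem_univ m) h
  have hevalP : ∀ m : Fin k,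
      eval ((b m : ℝ) : ℂ) (∏ i : Fin (k + 1), (X - C ((a i : ℝ) : ℂ))) =
        ((∏ i, (b m - a i) : ℝ) : ℂ) := by
    intro m
    rw [eval_prod]
    push_cast
    refine Finset.prod_congr rfl fun i _ => by simp
  constructor
  · intro h m
    have := congrArg (eval ((b m : ℝ) : ℂ)) h
    rw [eval_sub, hevalQ1 m, hevalS m, hevalP m, zero_sub] at this
    have := neg_eq_iff_eq_neg.mp this
    exact_mod_cast this
  · intro ht
    rcases Nat.eq_zero_or_pos k with hk | hk
    · subst hk
      simp [Fin.prod_univ_one, Fin.sum_univ_one]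
    · rw [← sub_eq_zero]
      set w' : ℂ := (((∑ i, a i) - ∑ i, b i : ℝ) : ℂ) with hw'
      set Q1 : ℂ[X] := (X - C w') * ∏ i, (X - C ((b i : ℝ) : ℂ)) with hQ1def
      set S : ℂ[X] := ∑ i, C ((t i : ℝ) : ℂ) *
        ∏ j ∈ univ.erase i, (X - C ((b j : ℝ) : ℂ)) with hSdef
      set P : ℂ[X] := ∏ i : Fin (k + 1), (X - C ((a i : ℝ) : ℂ)) with hPdef
      have hmonicprod : (∏ i, (X - C ((b i : ℝ) : ℂ))).Monic :=
        monic_prod_of_monic _ _ fun i _ => monic_X_sub_C _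
      have hQ1monic : Q1.Monic := (monic_X_sub_C _).mul hmonicprod
      have hprodnd : (∏ i, (X - C ((b i : ℝ) : ℂ))).natDegree = k := by
        rw [natDegree_prod_of_monic _ _ fun i _ => monic_X_sub_C _]
        simp [natDegree_X_sub_C]
      have hQ1deg : Q1.natDegree = k + 1 := by
        rw [hQ1def, (monic_X_sub_C _).natDegree_mul hmonicprod, natDegree_X_sub_C, hprodnd]
        omega
      have hPmonic : P.Monic := monic_prod_of_monic _ _ fun i _ => monic_X_sub_C _
      have hPdeg : P.natDegree = k + 1 := by
        rw [hPdef, natDegree_prod_of_monic _ _ fun i _ => monic_X_sub_C _]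
        simp [natDegree_X_sub_C]
      have hnext : Q1.nextCoeff = P.nextCoeff := by
        rw [hQ1def, hPdef, Monic.nextCoeff_mul (monic_X_sub_C _) hmonicprod,
          nextCoeff_X_sub_C, prod_X_sub_C_nextCoeff, prod_X_sub_C_nextCoeff, hw']
        push_cast
        ring
      have hQP : (Q1 - P).natDegree ≤ k - 1 := by
        rw [natDegree_le_iff_coeff_eq_zero]
        intro N hN
        have hN' : k ≤ N := by omega
        rw [coeff_sub]
        rcases eq_or_lt_of_le hN' with rfl | hN2
        · have e1 : Q1.coeff k = Q1.nextCoeff := by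
            rw [nextCoeff_of_natDegree_pos (by omega), hQ1deg]
            norm_num
          have e2 : P.coeff k = P.nextCoeff := by
            rw [nextCoeff_of_natDegree_pos (by omega), hPdeg]
            norm_num
          rw [e1, e2, hnext, sub_self]
        · rcases eq_or_lt_of_le (show Nat.succ k ≤ N from hN2) with hN3 | hN3
          · have e1 : Q1.coeff (k + 1) = 1 := by rw [← hQ1deg]; exact hQ1monic.coeff_natDegree
            have e2 : P.coeff (k + 1) = 1 := by rw [← hPdeg]; exact hPmonic.coeff_natDegree
            rw [← hN3, Nat.succ_eq_add_one, e1, e2, sub_self]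
          · rw [coeff_eq_zero_of_natDegree_lt (by omega : Q1.natDegree < N),
              coeff_eq_zero_of_natDegree_lt (by omega : P.natDegree < N), sub_self]
      have hSdeg : S.natDegree ≤ k - 1 := by
        rw [hSdef]
        refine natDegree_sum_le_of_forall_le _ _ fun i _ => ?_
        refine le_trans (natDegree_mul_le) ?_
        rw [natDegree_C, natDegree_prod_of_monic _ _ fun j _ => monic_X_sub_C _]
        simp [natDegree_X_sub_C, Finset.card_erase_of_mem]
      have hDdeg : (Q1 - S - P).natDegree < k := by
        have : Q1 - S - P = (Q1 - P) - S := by ring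
        rw [this]
        calc ((Q1 - P) - S).natDegree ≤ max (Q1 - P).natDegree S.natDegree :=
              natDegree_sub_le _ _
          _ ≤ k - 1 := max_le hQP hSdeg
          _ < k := by omega
      have hfinj : Function.Injective (fun m : Fin k => ((b m : ℝ) : ℂ)) :=
        fun i j h => hbinj (Complex.ofReal_injective h)
      have heval : ∀ m : Fin k, (Q1 - S - P).eval ((b m : ℝ) : ℂ) = 0 := by
        intro m
        rw [eval_sub, eval_sub, hevalQ1 m, hevalS m, hevalP m]
        have hc : ((t m * ∏ j ∈ univ.erase m, (b m - b j) : ℝ) : ℂ) =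
            ((- ∏ i, (b m - a i) : ℝ) : ℂ) := congrArg (fun r : ℝ => (r : ℂ)) (ht m)
        rw [hc]
        push_cast
        ring
      exact Polynomial.eq_zero_of_natDegree_lt_card_of_eval_eq_zero (Q1 - S - P) hfinj heval
        (by rwa [Fintype.card_fin])

lemma prod_neg_sign {ι : Type*} (s : Finset ι) (f : ι → ℝ) (h : ∀ i ∈ s, f i < 0) :
    0 < (-1) ^ s.card * ∏ i ∈ s, f i := by
  have h1 : ∏ i ∈ s, f i = (-1) ^ s.card * ∏ i ∈ s, (-f i) := by
    rw [← Finset.prod_const (-1 : ℝ), ← Finset.prod_mul_distrib]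
    exact Finset.prod_congr rfl fun i _ => by ring
  rw [h1, ← mul_assoc, ← pow_add, ← two_mul, pow_mul]
  norm_num
  exact Finset.prod_pos fun i hi => by linarith [h i hi]

/-- For strictly interlacing `a₁ > b₁ > … > a_k > b_k > a_{k+1}` and the forced diagonal
entry `z_{k+1} = Σ a_i − Σ b_i`, there are unique positive reals `δ₁, …, δ_k` such that
the arrow matrix `Z(z)` has eigenvalues `a₁, …, a_{k+1}` iff `|z_i|² = δ_i` for all `i`
(so the solution set is a real `k`-torus). -/
theorem stmt5 (k : ℕ) (a : Fin (k + 1) → ℝ) (b : Fin k → ℝ)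
    (hab : ∀ i : Fin k, b i < a i.castSucc ∧ a i.succ < b i) :
    ∃! δ : Fin k → ℝ, (∀ i, 0 < δ i) ∧
      ∀ z : Fin k → ℂ,
        ((arrowMatrix b z ((∑ i, a i) - ∑ i, b i)).charpoly =
            ∏ i : Fin (k + 1), (X - C ((a i : ℝ) : ℂ))) ↔
          ∀ i, Complex.normSq (z i) = δ i := by
  have ha : StrictAnti a := Fin.strictAnti_iff_succ_lt.mpr fun i => lt_trans (hab i).2 (hab i).1
  have hba : ∀ (m : Fin k) (i : Fin (k + 1)), (i : ℕ) ≤ (m : ℕ) → b m < a i := fun m i h =>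
    lt_of_lt_of_le (hab m).1 (ha.antitone (by rw [Fin.le_def]; simpa using h))
  have hab2 : ∀ (m : Fin k) (i : Fin (k + 1)), (m : ℕ) < (i : ℕ) → a i < b m := fun m i h =>
    lt_of_le_of_lt (ha.antitone (by rw [Fin.le_def]; simpa [Fin.val_succ] using h)) (hab m).2
  have hbb : ∀ m j : Fin k, (m : ℕ) < (j : ℕ) → b j < b m := fun m j h =>
    lt_trans (lt_of_lt_of_le (hab j).1
      (ha.antitone (by rw [Fin.le_def]; simpa [Fin.val_succ] using h))) (hab m).2
  have hbinj : Function.Injective b := by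
    intro i j hij
    by_contra hne
    rcases Nat.lt_trichotomy (i : ℕ) (j : ℕ) with h | h | h
    · exact absurd hij.symm (ne_of_lt (hbb i j h))
    · exact hne (Fin.ext h)
    · exact absurd hij (ne_of_lt (hbb j i h))
  set num : Fin k → ℝ := fun m => ∏ i, (b m - a i) with hnumdef
  set den : Fin k → ℝ := fun m => ∏ j ∈ univ.erase m, (b m - b j) with hdendef
  have hden : ∀ m, den m ≠ 0 := by
    intro m
    simp only [hdendef]
    refine Finset.prod_ne_zero_iff.mpr fun j hj => sub_ne_zero.mpr ?_
    exact fun h => (Finset.mem_erase.mp hj).1 (hbinj h.symm)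
  have hkey : ∀ m : Fin k, 0 < -num m * den m := by
    intro m
    have hmk : (m : ℕ) < k := m.isLt
    set F : ℕ → ℝ := fun i => if h : i < k + 1 then b m - a ⟨i, h⟩ else 1 with hF
    set G : ℕ → ℝ := fun j =>
      if h : j < k then (if (⟨j, h⟩ : Fin k) = m then 1 else b m - b ⟨j, h⟩) else 1 with hG
    have hnumF : num m = (∏ i ∈ Finset.range ((m : ℕ) + 1), F i) *
        ∏ i ∈ Finset.Ico ((m : ℕ) + 1) (k + 1), F i := by
      simp only [hnumdef]
      have h1 : ∏ i : Fin (k + 1), (b m - a i) = ∏ i ∈ Finset.range (k + 1), F i := by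
        rw [← Fin.prod_univ_eq_prod_range F (k + 1)]
        exact Finset.prod_congr rfl fun i _ => by simp only [hF]; simp [Fin.eta, Nat.not_lt.mpr (Nat.lt_succ_iff.mp i.isLt)]
      rw [h1, Finset.range_eq_Ico, ← Finset.prod_Ico_consecutive _ (Nat.zero_le ((m : ℕ) + 1))
        (by omega), ← Finset.range_eq_Ico]
    have hdenG : den m = (∏ j ∈ Finset.range (m : ℕ), G j) *
        ∏ j ∈ Finset.Ico ((m : ℕ) + 1) k, G j := by
      simp only [hdendef]
      rw [prod_erase_eq]
      have h1 : ∏ j : Fin k, (if j = m then 1 else b m - b j) = ∏ j ∈ Finset.range k, G j := by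
        rw [← Fin.prod_univ_eq_prod_range G k]
        exact Finset.prod_congr rfl fun j _ => by simp only [hG]; simp [Fin.eta]
      rw [h1, Finset.range_eq_Ico, ← Finset.prod_Ico_consecutive _ (Nat.zero_le (m : ℕ))
        (le_of_lt hmk), Finset.prod_eq_prod_Ico_succ_bot hmk, ← Finset.range_eq_Ico]
      simp only [hG]
      simp [Fin.eta]
    have hp1 : 0 < (-1 : ℝ) ^ ((m : ℕ) + 1) * ∏ i ∈ Finset.range ((m : ℕ) + 1), F i := by
      have := prod_neg_sign (Finset.range ((m : ℕ) + 1)) F (fun i hi => by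
        rw [Finset.mem_range] at hi
        simp only [hF]
        have hik : i < k + 1 := by omega
        rw [dif_pos hik]
        exact sub_neg.mpr (hba m ⟨i, hik⟩ (by simpa using Nat.lt_succ_iff.mp hi)))
      rwa [Finset.card_range] at this
    have hp2 : 0 < ∏ i ∈ Finset.Ico ((m : ℕ) + 1) (k + 1), F i := by
      refine Finset.prod_pos fun i hi => ?_
      rw [Finset.mem_Ico] at hi
      simp only [hF]
      have hik : i < k + 1 := hi.2
      rw [dif_pos hik]
      exact sub_pos.mpr (hab2 m ⟨i, hik⟩ (by simpa using hi.1))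
    have hq1 : 0 < (-1 : ℝ) ^ (m : ℕ) * ∏ j ∈ Finset.range (m : ℕ), G j := by
      have := prod_neg_sign (Finset.range (m : ℕ)) G (fun j hj => by
        rw [Finset.mem_range] at hj
        simp only [hG]
        have hjk : j < k := by omega
        rw [dif_pos hjk, if_neg (by simp [Fin.ext_iff]; omega)]
        exact sub_neg.mpr (hbb ⟨j, hjk⟩ m (by simpa using hj)))
      rwa [Finset.card_range] at this
    have hq2 : 0 < ∏ j ∈ Finset.Ico ((m : ℕ) + 1) k, G j := by
      refine Finset.prod_pos fun j hj => ?_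
      rw [Finset.mem_Ico] at hj
      simp only [hG]
      have hjk : j < k := hj.2
      rw [dif_pos hjk, if_neg (by simp [Fin.ext_iff]; omega)]
      exact sub_pos.mpr (hbb m ⟨j, hjk⟩ (by simpa using hj.1))
    have hsign : ((-1 : ℝ)) ^ ((m : ℕ) + 1) * (-1 : ℝ) ^ (m : ℕ) = -1 := by
      rw [← pow_add]
      have h2 : (m : ℕ) + 1 + (m : ℕ) = 2 * (m : ℕ) + 1 := by ring
      rw [h2, pow_succ, pow_mul]
      norm_num
    have hbig : 0 < ((-1 : ℝ) ^ ((m : ℕ) + 1) * ∏ i ∈ Finset.range ((m : ℕ) + 1), F i) *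
        (((-1 : ℝ) ^ (m : ℕ) * ∏ j ∈ Finset.range (m : ℕ), G j) *
          ((∏ i ∈ Finset.Ico ((m : ℕ) + 1) (k + 1), F i) *
            ∏ j ∈ Finset.Ico ((m : ℕ) + 1) k, G j)) :=
      mul_pos hp1 (mul_pos hq1 (mul_pos hp2 hq2))
    have heq : -num m * den m =
        ((-1 : ℝ) ^ ((m : ℕ) + 1) * ∏ i ∈ Finset.range ((m : ℕ) + 1), F i) *
        (((-1 : ℝ) ^ (m : ℕ) * ∏ j ∈ Finset.range (m : ℕ), G j) *
          ((∏ i ∈ Finset.Ico ((m : ℕ) + 1) (k + 1), F i) *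
            ∏ j ∈ Finset.Ico ((m : ℕ) + 1) k, G j)) := by
      rw [hnumF, hdenG]
      linear_combination (-(∏ i ∈ Finset.range ((m : ℕ) + 1), F i) *
        (∏ j ∈ Finset.range (m : ℕ), G j) *
        (∏ i ∈ Finset.Ico ((m : ℕ) + 1) (k + 1), F i) *
        (∏ j ∈ Finset.Ico ((m : ℕ) + 1) k, G j)) * hsign
    rw [heq]
    exact hbig
  have hpos : ∀ m, 0 < -num m / den m := by
    intro m
    have h2 : -num m / den m = (-num m * den m) / (den m * den m) :=
      (mul_div_mul_right _ _ (hden m)).symm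
    rw [h2]
    exact div_pos (hkey m) (mul_self_pos.mpr (hden m))
  have hprop : ∀ z : Fin k → ℂ,
      ((arrowMatrix b z ((∑ i, a i) - ∑ i, b i)).charpoly =
          ∏ i : Fin (k + 1), (X - C ((a i : ℝ) : ℂ))) ↔
        ∀ i, Complex.normSq (z i) = -num i / den i := by
    intro z
    rw [arrow_charpoly, keyPoly a b hbinj (fun i => Complex.normSq (z i))]
    constructor
    · intro h i
      rw [eq_div_iff (hden i)]
      have := h i
      simp only [hnumdef, hdendef]
      linarith [h i]
    · intro h m
      have := h m
      rw [eq_div_iff (hden m)] at this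
      simp only [hnumdef, hdendef] at this ⊢
      linarith
  refine ⟨fun m => -num m / den m, ⟨hpos, hprop⟩, ?_⟩
  intro y hy
  funext i
  set z : Fin k → ℂ := fun i => ((Real.sqrt (-num i / den i) : ℝ) : ℂ) with hz
  have hzn : ∀ i, Complex.normSq (z i) = -num i / den i := by
    intro i
    simp only [hz]
    simp only [Complex.normSq_ofReal]
    exact Real.mul_self_sqrt (le_of_lt (hpos i))
  have hchar := (hprop z).mpr hzn
  rw [← (hy.2 z).mp hchar i, hzn i]
end

section
/- Let a_1 ≥ b_1 ≥ … ≥ a_k ≥ b_k ≥ a_{k+1} be real numbers and suppose that for some indices j, ℓ ≥ 1 one has b_j > a_{j+1} = b_{j+1} = … = a_{j+ℓ} = b_{j+ℓ} > a_{j+ℓ+1}. Let Z(z) be the (k+1)×(k+1) Hermitian arrow matrix with diagonal b_1,…,b_k,z_{k+1}, last column \bar{z}_1,…,\bar{z}_k and last row z_1,…,z_k. If Z(z) has eigenvalues a_1,…,a_{k+1} with multiplicity, then z_{j+1} = z_{j+2} = … = z_{j+ℓ} = 0. -/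
open Polynomial

open Matrix

lemma charpoly_diag {n : Type*} [Fintype n] [DecidableEq n] {R : Type*} [CommRing R]
    (d : n → R) : (Matrix.diagonal d).charpoly = ∏ i, (X - C (d i)) := by
  have h : charmatrix (Matrix.diagonal d) = Matrix.diagonal fun i => (X : R[X]) - C (d i) := by
    ext i j
    by_cases hij : i = j
    · subst hij; simp [charmatrix_apply_eq]
    · simp [charmatrix_apply_ne _ _ _ hij, Matrix.diagonal_apply_ne _ hij,
        Matrix.diagonal_apply_ne]
  rw [Matrix.charpoly, h, Matrix.det_diagonal]

lemma charpoly_conj {n : Type*} [Fintype n] [DecidableEq n] {R : Type*} [CommRing R]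
    (U V A : Matrix n n R) (hUV : U * V = 1) (hVU : V * U = 1) :
    (V * A * U).charpoly = A.charpoly := by
  have hC : ∀ M N : Matrix n n R, (M * N).map (C : R →+* R[X]) = M.map C * N.map C := by
    intro M N; exact Matrix.map_mul
  have key : charmatrix (V * A * U) = V.map C * charmatrix A * U.map C := by
    unfold charmatrix
    simp only [RingHom.mapMatrix_apply]
    rw [Matrix.mul_sub, Matrix.sub_mul, ← hC, ← hC]
    congr 1
    · rw [mul_assoc, scalar_commute (X : R[X]) (Commute.all X) (U.map C), ← mul_assoc, ← hC, hVU]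
      simp
  rw [Matrix.charpoly, Matrix.charpoly, key, Matrix.det_mul, Matrix.det_mul,
    mul_comm (Matrix.det (V.map C)), mul_assoc, ← Matrix.det_mul, ← hC, hVU]
  simp

lemma herm_charpoly {n : Type*} [Fintype n] [DecidableEq n] {A : Matrix n n ℂ}
    (hA : A.IsHermitian) :
    A.charpoly = ∏ i, (X - C ((hA.eigenvalues i : ℝ) : ℂ)) := by
  have hs := hA.conjStarAlgAut_star_eigenvectorUnitary
  rw [Unitary.conjStarAlgAut_star_apply] at hs
  have hU := (Matrix.mem_unitaryGroup_iff).mp (hA.eigenvectorUnitary).2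
  have hU' := (Matrix.mem_unitaryGroup_iff').mp (hA.eigenvectorUnitary).2
  calc A.charpoly
      = ((star (hA.eigenvectorUnitary : Matrix n n ℂ)) * A *
          (hA.eigenvectorUnitary : Matrix n n ℂ)).charpoly := by
        rw [charpoly_conj _ _ _ hU hU']
    _ = ∏ i, (X - C ((hA.eigenvalues i : ℝ) : ℂ)) := by
        rw [hs, charpoly_diag]; rfl


lemma prod_X_sub_C_roots {ι : Type*} [Fintype ι] (f : ι → ℂ) :
    (∏ i, (X - C (f i))).roots = Finset.univ.val.map f := by
  have : ∏ i, (X - C (f i)) = ((Finset.univ.val.map f).map fun a => X - C a).prod := by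
    rw [Multiset.map_map]; rfl
  rw [this, roots_multiset_prod_X_sub_C]

lemma count_eq {ι κ : Type*} [Fintype ι] [Fintype κ] (f : ι → ℂ) (g : κ → ℂ)
    (h : ∏ i, (X - C (f i)) = ∏ i, (X - C (g i))) (c : ℂ) :
    (Finset.univ.filter fun i => f i = c).card =
      (Finset.univ.filter fun i => g i = c).card := by
  have h2 := congrArg Polynomial.roots h
  rw [prod_X_sub_C_roots, prod_X_sub_C_roots] at h2
  have h3 := congrArg (Multiset.count c) h2
  rw [Multiset.count_map, Multiset.count_map] at h3
  simpa [Finset.card, Finset.filter, eq_comm] using h3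

lemma arrow_isHermitian {k : ℕ} (b : Fin k → ℝ) (z : Fin k → ℂ) (w : ℝ) :
    (arrowMatrix b z w).IsHermitian := by
  rw [Matrix.IsHermitian]
  ext i j
  rw [Matrix.conjTranspose_apply]
  unfold arrowMatrix
  by_cases hik : (i : ℕ) < k <;> by_cases hjk : (j : ℕ) < k
  · by_cases hij : i = j <;> simp [hik, hjk, hij, eq_comm, Complex.conj_ofReal]
  · simp [hik, hjk]
  · simp [hik, hjk]
  · simp [hik, hjk, Complex.conj_ofReal]

lemma arrow_mulVec_castSucc {k : ℕ} (b : Fin k → ℝ) (z : Fin k → ℂ) (w : ℝ)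
    (v : Fin (k + 1) → ℂ) (i : Fin k) :
    ((arrowMatrix b z w) *ᵥ v) i.castSucc
      = (b i : ℂ) * v i.castSucc + (starRingEnd ℂ) (z i) * v (Fin.last k) := by
  simp only [Matrix.mulVec, dotProduct]
  rw [Fin.sum_univ_castSucc]
  have h1 : ∀ m : Fin k, arrowMatrix b z w i.castSucc m.castSucc
      = if i = m then (b i : ℂ) else 0 := by
    intro m
    unfold arrowMatrix
    have him : ((i.castSucc : Fin (k+1)) : ℕ) < k := i.isLt
    have hmm : ((m.castSucc : Fin (k+1)) : ℕ) < k := m.isLt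
    rw [dif_pos him, dif_pos hmm]
    simp [Fin.castSucc_inj]
  have h2 : arrowMatrix b z w i.castSucc (Fin.last k) = (starRingEnd ℂ) (z i) := by
    unfold arrowMatrix
    have him : ((i.castSucc : Fin (k+1)) : ℕ) < k := i.isLt
    have hlk : ¬ (((Fin.last k : Fin (k+1)) : ℕ) < k) := by simp
    rw [dif_pos him, dif_neg hlk]
    simp
  rw [h2]
  congr 1
  rw [Finset.sum_congr rfl (fun m _ => by rw [h1 m])]
  simp only [ite_mul, zero_mul, Finset.sum_ite_eq, Finset.mem_univ, if_true]

lemma arrow_mulVec_last {k : ℕ} (b : Fin k → ℝ) (z : Fin k → ℂ) (w : ℝ)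
    (v : Fin (k + 1) → ℂ) :
    ((arrowMatrix b z w) *ᵥ v) (Fin.last k)
      = (∑ m : Fin k, z m * v m.castSucc) + (w : ℂ) * v (Fin.last k) := by
  simp only [Matrix.mulVec, dotProduct]
  rw [Fin.sum_univ_castSucc]
  have h1 : ∀ m : Fin k, arrowMatrix b z w (Fin.last k) m.castSucc = z m := by
    intro m
    unfold arrowMatrix
    have hlk : ¬ (((Fin.last k : Fin (k+1)) : ℕ) < k) := by simp
    have hmm : ((m.castSucc : Fin (k+1)) : ℕ) < k := m.isLt
    rw [dif_neg hlk, dif_pos hmm]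
    simp
  have h2 : arrowMatrix b z w (Fin.last k) (Fin.last k) = (w : ℂ) := by
    unfold arrowMatrix
    have hlk : ¬ (((Fin.last k : Fin (k+1)) : ℕ) < k) := by simp
    rw [dif_neg hlk, dif_neg hlk]
  rw [h2]
  congr 1
  exact Finset.sum_congr rfl (fun m _ => by rw [h1 m])

/-- (1-based indexing.) If `a₁ ≥ b₁ ≥ … ≥ a_k ≥ b_k ≥ a_{k+1}` and for some `j, ℓ ≥ 1`
one has `b_j > a_{j+1} = b_{j+1} = … = a_{j+ℓ} = b_{j+ℓ} > a_{j+ℓ+1}`, then any arrow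
matrix `Z(z)` with diagonal `b₁,…,b_k,w` whose eigenvalues are `a₁, …, a_{k+1}` (with
multiplicity) satisfies `z_{j+1} = … = z_{j+ℓ} = 0`. -/
theorem stmt6 (k j ℓ : ℕ) (hj : 1 ≤ j) (hℓ : 1 ≤ ℓ) (hjl : j + ℓ ≤ k)
    (a b : ℕ → ℝ)
    (hab : ∀ i, 1 ≤ i → i ≤ k → b i ≤ a i ∧ a (i + 1) ≤ b i)
    (hgt : b j > a (j + 1))
    (hchain1 : ∀ s, 1 ≤ s → s ≤ ℓ → a (j + s) = a (j + 1))
    (hchain2 : ∀ s, 1 ≤ s → s ≤ ℓ → b (j + s) = a (j + 1))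
    (hlt : a (j + 1) > a (j + ℓ + 1))
    (z : Fin k → ℂ) (w : ℝ)
    (hchar : (arrowMatrix (fun i : Fin k => b ((i : ℕ) + 1)) z w).charpoly =
      ∏ i : Fin (k + 1), (X - C ((a ((i : ℕ) + 1) : ℝ) : ℂ))) :
    ∀ s, ∀ _ : 1 ≤ s, ∀ _ : s ≤ ℓ, z ⟨j + s - 1, by omega⟩ = 0 := by
  intro s hs1 hs2
  by_contra hz0
  set b' : Fin k → ℝ := fun i => b ((i : ℕ) + 1) with hb'
  have hHerm := arrow_isHermitian b' z w
  set lam : ℝ := a (j + 1) with hlam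
  have hi0lt : j + s - 1 < k := by omega
  set i0 : Fin k := ⟨j + s - 1, hi0lt⟩ with hi0
  -- monotonicity
  have hstep : ∀ q, 1 ≤ q → q ≤ k → a (q + 1) ≤ a q := fun q h1 h2 =>
    le_trans (hab q h1 h2).2 (hab q h1 h2).1
  have ha_mono : ∀ p q, 1 ≤ p → p ≤ q → q ≤ k + 1 → a q ≤ a p := by
    intro p q h1 hpq
    induction q, hpq using Nat.le_induction with
    | base => intro _; exact le_refl _
    | succ q hpq ih =>
      intro hq
      exact le_trans (hstep q (by omega) (by omega)) (ih (by omega))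
  have hb_mono : ∀ p q, 1 ≤ p → p ≤ q → q ≤ k → b q ≤ b p := by
    intro p q h1 hpq
    induction q, hpq using Nat.le_induction with
    | base => intro _; exact le_refl _
    | succ q hpq ih =>
      intro hq
      exact le_trans (le_trans (hab (q + 1) (by omega) (by omega)).1
        (hab q (by omega) (by omega)).2) (ih (by omega))
  -- block facts
  have hblk_b : ∀ i : Fin k, j ≤ (i : ℕ) → (i : ℕ) < j + ℓ → b ((i : ℕ) + 1) = lam := by
    intro i h1 h2
    have h := hchain2 ((i : ℕ) + 1 - j) (by omega) (by omega)
    rwa [show j + ((i : ℕ) + 1 - j) = (i : ℕ) + 1 by omega] at h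
  have hoff_b : ∀ i : Fin k, ¬(j ≤ (i : ℕ) ∧ (i : ℕ) < j + ℓ) → b ((i : ℕ) + 1) ≠ lam := by
    intro i hni he
    rcases Nat.lt_or_ge (i : ℕ) j with h | h
    · have h1 : b j ≤ b ((i : ℕ) + 1) := hb_mono ((i : ℕ) + 1) j (by omega) (by omega) (by omega)
      rw [he] at h1
      linarith
    · have h2 : j + ℓ ≤ (i : ℕ) := by omega
      have h3 : a ((i : ℕ) + 1) ≤ a (j + ℓ + 1) :=
        ha_mono (j + ℓ + 1) ((i : ℕ) + 1) (by omega) (by omega) (by omega)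
      have h4 : b ((i : ℕ) + 1) ≤ a ((i : ℕ) + 1) := (hab ((i : ℕ) + 1) (by omega) (by omega)).1
      rw [he] at h4
      linarith
  -- the number of eigenvalues equal to lam is ℓ
  have hEq : (∏ i : Fin (k + 1), (X - C ((a ((i : ℕ) + 1) : ℝ) : ℂ))) =
      ∏ i : Fin (k + 1), (X - C ((hHerm.eigenvalues i : ℝ) : ℂ)) := by
    rw [← hchar, herm_charpoly hHerm]
  have hcnt := count_eq _ _ hEq ((lam : ℝ) : ℂ)
  have hAfilter : (Finset.univ.filter fun i : Fin (k + 1) =>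
        ((a ((i : ℕ) + 1) : ℝ) : ℂ) = ((lam : ℝ) : ℂ)) =
      (Finset.univ : Finset (Fin ℓ)).image
        (fun t : Fin ℓ => (⟨j + (t : ℕ), by have := t.isLt; omega⟩ : Fin (k + 1))) := by
    ext i
    simp only [Finset.mem_filter, Finset.mem_univ, true_and, Finset.mem_image,
      Complex.ofReal_inj]
    constructor
    · intro he
      have hin : j ≤ (i : ℕ) ∧ (i : ℕ) < j + ℓ := by
        by_contra hni
        rcases Nat.lt_or_ge (i : ℕ) j with h | h
        · have h1 : a j ≤ a ((i : ℕ) + 1) :=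
            ha_mono ((i : ℕ) + 1) j (by omega) (by omega) (by omega)
          have h2 : b j ≤ a j := (hab j (by omega) (by omega)).1
          rw [he] at h1
          linarith
        · have h2 : j + ℓ ≤ (i : ℕ) := by omega
          have h3 : a ((i : ℕ) + 1) ≤ a (j + ℓ + 1) :=
            ha_mono (j + ℓ + 1) ((i : ℕ) + 1) (by omega) (by omega) (by omega)
          rw [he] at h3
          linarith
      refine ⟨⟨(i : ℕ) - j, by omega⟩, ?_⟩
      ext
      simp
      omega
    · rintro ⟨t, rfl⟩
      have htl := t.isLt
      have h := hchain1 ((t : ℕ) + 1) (by omega) (by omega)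
      rw [show j + ((t : ℕ) + 1) = j + (t : ℕ) + 1 by omega] at h
      simpa using h
  have hcard_a : (Finset.univ.filter fun i : Fin (k + 1) =>
      ((a ((i : ℕ) + 1) : ℝ) : ℂ) = ((lam : ℝ) : ℂ)).card = ℓ := by
    rw [hAfilter, Finset.card_image_of_injective _ ?_, Finset.card_univ, Fintype.card_fin]
    intro t t' h
    have h2 := congrArg (fun x : Fin (k + 1) => (x : ℕ)) h
    simp only [] at h2
    exact Fin.ext (by omega)
  set T : Finset (Fin (k + 1)) :=
    Finset.univ.filter (fun t => hHerm.eigenvalues t = lam) with hTdef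
  have hT : T.card = ℓ := by
    rw [hTdef]
    rw [hcard_a] at hcnt
    rw [hcnt]
    congr 1
    ext t
    simp [Complex.ofReal_inj]
  -- eigenvector facts
  obtain ⟨u, hu⟩ : ∃ u : Fin (k + 1) → Fin (k + 1) → ℂ,
      ∀ t, u t = ⇑(hHerm.eigenvectorBasis t) := ⟨_, fun _ => rfl⟩
  have hEv : ∀ t : Fin (k + 1), hHerm.eigenvalues t = lam →
      ∀ i, (arrowMatrix b' z w *ᵥ u t) i = (lam : ℂ) * u t i := by
    intro t ht i
    have h := congrFun (hHerm.mulVec_eigenvectorBasis t) i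
    rw [ht] at h
    rw [hu]
    calc (arrowMatrix b' z w *ᵥ ⇑(hHerm.eigenvectorBasis t)) i
        = (lam • ⇑(hHerm.eigenvectorBasis t)) i := h
      _ = (lam : ℂ) * ⇑(hHerm.eigenvectorBasis t) i := by
          simp [Complex.real_smul]
  have hblk_i0 : j ≤ (i0 : ℕ) ∧ (i0 : ℕ) < j + ℓ := by
    rw [hi0]
    constructor <;> simp <;> omega
  have hlast : ∀ t : Fin (k + 1), hHerm.eigenvalues t = lam → u t (Fin.last k) = 0 := by
    intro t ht
    have h := hEv t ht i0.castSucc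
    rw [arrow_mulVec_castSucc] at h
    have hb0 : (b' i0 : ℂ) = ((lam : ℝ) : ℂ) := by
      rw [hb']
      exact congrArg (fun x : ℝ => (x : ℂ)) (hblk_b i0 hblk_i0.1 hblk_i0.2)
    rw [hb0] at h
    have h2 : (starRingEnd ℂ) (z i0) * u t (Fin.last k) = 0 := by linear_combination h
    rcases mul_eq_zero.mp h2 with h3 | h3
    · refine absurd ?_ hz0
      have h4 := congrArg (starRingEnd ℂ) h3
      simpa using h4
    · exact h3
  have hoff : ∀ t : Fin (k + 1), hHerm.eigenvalues t = lam →
      ∀ i : Fin k, ¬(j ≤ (i : ℕ) ∧ (i : ℕ) < j + ℓ) → u t i.castSucc = 0 := by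
    intro t ht i hni
    have h := hEv t ht i.castSucc
    rw [arrow_mulVec_castSucc, hlast t ht, mul_zero, add_zero] at h
    have hbne : (b' i : ℂ) ≠ ((lam : ℝ) : ℂ) := by
      rw [hb']
      intro he
      exact hoff_b i hni (by exact_mod_cast he)
    have h2 : ((b' i : ℂ) - ((lam : ℝ) : ℂ)) * u t i.castSucc = 0 := by linear_combination h
    rcases mul_eq_zero.mp h2 with h3 | h3
    · exact absurd (sub_eq_zero.mp h3) hbne
    · exact h3
  have hsum : ∀ t : Fin (k + 1), hHerm.eigenvalues t = lam →
      (∑ m : Fin k, z m * u t m.castSucc) = 0 := by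
    intro t ht
    have h := hEv t ht (Fin.last k)
    rw [arrow_mulVec_last, hlast t ht, mul_zero, add_zero, mul_zero] at h
    exact h
  -- restriction to the block
  have helt : ∀ r : Fin ℓ, j + (r : ℕ) < k := fun r => by omega
  set e : Fin ℓ → Fin k := fun r => ⟨j + (r : ℕ), helt r⟩ with he
  set V : ↥T → (Fin ℓ → ℂ) := fun t r => u (t : Fin (k + 1)) (e r).castSucc with hV
  have hmemT : ∀ t : ↥T, hHerm.eigenvalues (t : Fin (k + 1)) = lam := fun t =>
    (Finset.mem_filter.mp t.2).2
  have hinj : ∀ r ∈ Finset.univ, ∀ r' ∈ (Finset.univ : Finset (Fin ℓ)),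
      (e r).castSucc = (e r').castSucc → r = r' := by
    intro r _ r' _ hrr
    have h2 := congrArg (fun x : Fin (k + 1) => (x : ℕ)) hrr
    simp [he] at h2
    exact Fin.ext h2
  -- Gram identities
  have hGram : ∀ t t' : Fin (k + 1), hHerm.eigenvalues t = lam → hHerm.eigenvalues t' = lam →
      (∑ r : Fin ℓ, (starRingEnd ℂ) (u t (e r).castSucc) * u t' (e r).castSucc)
        = if t = t' then 1 else 0 := by
    intro t t' ht ht'
    have horth0 := orthonormal_iff_ite.mp hHerm.eigenvectorBasis.orthonormal t t'
    rw [PiLp.inner_apply] at horth0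
    simp only [RCLike.inner_apply] at horth0
    have horth : (∑ i : Fin (k + 1), (starRingEnd ℂ) (u t i) * u t' i)
        = if t = t' then 1 else 0 := by
      rw [hu t, hu t']
      rw [← horth0]
      exact Finset.sum_congr rfl (fun _ _ => mul_comm _ _)
    have himg : ∀ i : Fin (k + 1), i ∉ Finset.univ.image (fun r : Fin ℓ => (e r).castSucc) →
        u t i = 0 := by
      intro i hni
      by_cases hik : (i : ℕ) < k
      · have hoffc : ¬(j ≤ (i : ℕ) ∧ (i : ℕ) < j + ℓ) := by
          rintro ⟨h1, h2⟩
          apply hni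
          rw [Finset.mem_image]
          refine ⟨⟨(i : ℕ) - j, by omega⟩, Finset.mem_univ _, ?_⟩
          ext
          simp [he]
          omega
        have h := hoff t ht ⟨(i : ℕ), hik⟩ hoffc
        have hie : (⟨(i : ℕ), hik⟩ : Fin k).castSucc = i := by
          ext
          simp
        rwa [hie] at h
      · have hie : i = Fin.last k := by
          ext
          simp
          have h2 := i.isLt
          omega
        rw [hie]
        exact hlast t ht
    calc (∑ r : Fin ℓ, (starRingEnd ℂ) (u t (e r).castSucc) * u t' (e r).castSucc)
        = ∑ i ∈ Finset.univ.image (fun r : Fin ℓ => (e r).castSucc),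
            (starRingEnd ℂ) (u t i) * u t' i := by rw [Finset.sum_image hinj]
      _ = ∑ i : Fin (k + 1), (starRingEnd ℂ) (u t i) * u t' i :=
          Finset.sum_subset (Finset.subset_univ _)
            (fun i _ hni => by rw [himg i hni, map_zero, zero_mul])
      _ = if t = t' then 1 else 0 := horth
  have hVGram : ∀ t t' : ↥T,
      (∑ r : Fin ℓ, (starRingEnd ℂ) (V t r) * V t' r) = if t = t' then 1 else 0 := by
    intro t t'
    simp only [hV]
    rw [hGram _ _ (hmemT t) (hmemT t')]
    exact if_congr Subtype.ext_iff.symm rfl rfl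
  -- linear independence
  have hlin : LinearIndependent ℂ V := by
    rw [Fintype.linearIndependent_iff]
    intro c hc t'
    have h0 : (∑ r : Fin ℓ, (starRingEnd ℂ) (V t' r) * (∑ t : ↥T, c t • V t) r) = 0 := by
      rw [hc]
      simp
    have h1 : ∀ r : Fin ℓ, (∑ t : ↥T, c t • V t) r = ∑ t : ↥T, c t * V t r := by
      intro r
      simp [Finset.sum_apply]
    simp only [h1] at h0
    have h2 : (∑ r : Fin ℓ, (starRingEnd ℂ) (V t' r) * ∑ t : ↥T, c t * V t r)
        = ∑ t : ↥T, c t * ∑ r : Fin ℓ, (starRingEnd ℂ) (V t' r) * V t r := by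
      simp_rw [Finset.mul_sum]
      rw [Finset.sum_comm]
      refine Finset.sum_congr rfl fun t _ => Finset.sum_congr rfl fun r _ => by ring
    rw [h2] at h0
    simp only [hVGram] at h0
    simpa using h0
  have hTne : Nonempty ↥T := by
    rw [Finset.nonempty_coe_sort]
    exact Finset.card_pos.mp (by omega)
  have hspan : Submodule.span ℂ (Set.range V) = ⊤ := by
    have hcard : Fintype.card ↥T = ℓ := by rw [Fintype.card_coe, hT]
    exact hlin.span_eq_top_of_card_eq_finrank (by rw [hcard, Module.finrank_fin_fun])
  -- the linear functional
  set F : (Fin ℓ → ℂ) →ₗ[ℂ] ℂ :=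
    { toFun := fun v => ∑ r : Fin ℓ, z (e r) * v r,
      map_add' := by
        intro x y
        simp [mul_add, Finset.sum_add_distrib]
      map_smul' := by
        intro c x
        simp only [Pi.smul_apply, smul_eq_mul, RingHom.id_apply, Finset.mul_sum]
        exact Finset.sum_congr rfl fun r _ => by ring } with hF
  have hFV : ∀ t : ↥T, F (V t) = (0 : (Fin ℓ → ℂ) →ₗ[ℂ] ℂ) (V t) := by
    intro t
    show (∑ r : Fin ℓ, z (e r) * V t r) = _
    simp only [hV, LinearMap.zero_apply]
    have hzero : ∀ m : Fin k, m ∈ Finset.univ →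
        m ∉ Finset.univ.image e → z m * u (t : Fin (k + 1)) m.castSucc = 0 := by
      intro m _ hni
      have hmoff : ¬(j ≤ (m : ℕ) ∧ (m : ℕ) < j + ℓ) := by
        rintro ⟨h1, h2⟩
        apply hni
        rw [Finset.mem_image]
        refine ⟨⟨(m : ℕ) - j, by omega⟩, Finset.mem_univ _, ?_⟩
        ext
        simp [he]
        omega
      rw [hoff _ (hmemT t) m hmoff, mul_zero]
    have hinj' : ∀ r ∈ Finset.univ, ∀ r' ∈ (Finset.univ : Finset (Fin ℓ)),
        e r = e r' → r = r' := by
      intro r _ r' _ hrr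
      have h2 := congrArg (fun x : Fin k => (x : ℕ)) hrr
      simp [he] at h2
      exact Fin.ext h2
    calc (∑ r : Fin ℓ, z (e r) * u (t : Fin (k + 1)) (e r).castSucc)
        = ∑ m ∈ Finset.univ.image e, z m * u (t : Fin (k + 1)) m.castSucc :=
          by rw [Finset.sum_image hinj']
      _ = ∑ m : Fin k, z m * u (t : Fin (k + 1)) m.castSucc :=
          Finset.sum_subset (Finset.subset_univ _) hzero
      _ = 0 := hsum _ (hmemT t)
  have hF0 : F = 0 := LinearMap.ext_on_range hspan hFV
  have hr0lt : s - 1 < ℓ := by omega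
  have hkey : F (Pi.single (⟨s - 1, hr0lt⟩ : Fin ℓ) (1 : ℂ)) = z i0 := by
    rw [hF]
    simp only [LinearMap.coe_mk, AddHom.coe_mk]
    rw [Finset.sum_eq_single (⟨s - 1, hr0lt⟩ : Fin ℓ)]
    · have he0 : e ⟨s - 1, hr0lt⟩ = i0 := by
        rw [he, hi0]
        ext
        simp
        omega
      rw [he0]
      simp
    · intro r _ hr
      rw [Pi.single_apply, if_neg hr, mul_zero]
    · intro hni
      exact absurd (Finset.mem_univ _) hni
  rw [hF0] at hkey
  simp only [LinearMap.zero_apply] at hkey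
  exact hz0 hkey.symm
end

section
/- Fix an integer m ≥ 1. Define complex numbers y_{i,j} for 1 ≤ i, j ≤ m with i + j ≤ m + 1 by: y_{i,i} = 1; y_{i,j} = ∏_{r=0}^{j−i−1}(2i + 2r) for i < j; and y_{i,j} = ∏_{r=0}^{i−j−1}(2j + 2r)^{−1} for i > j. Then all y_{i,j} are nonzero, y_{i,j} = (y_{j,i})^{−1}, and for all (i,j) with i + j ≤ m the relation −y_{i,j+1}/y_{i,j} − y_{i−1,j}/y_{i,j} + y_{i,j}/y_{i+1,j} + y_{i,j}/y_{i,j−1} = 0 holds, where by convention terms with index 0 (i.e. y_{0,j} or y_{i,0}) are interpreted as: y_{i−1,j}/y_{i,j} = 0 when i = 1, and y_{i,j}/y_{i,j−1} = 0 when j = 1. -/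
/-- The explicit candidate solution: `y i i = 1`, `y i j = ∏_{r=0}^{j-i-1} (2i + 2r)` for
`i < j`, and `y i j = (∏_{r=0}^{i-j-1} (2j + 2r))⁻¹` for `i > j` (1-based indices). -/
noncomputable def ySol (i j : ℕ) : ℂ :=
  if i = j then 1
  else if i < j then ∏ r ∈ Finset.range (j - i), ((2 * i + 2 * r : ℕ) : ℂ)
  else (∏ r ∈ Finset.range (i - j), ((2 * j + 2 * r : ℕ) : ℂ))⁻¹

lemma ySol_ne_zero {i j : ℕ} (hi : 1 ≤ i) (hj : 1 ≤ j) : ySol i j ≠ 0 := by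
  unfold ySol
  split_ifs with h1 h2
  · exact one_ne_zero
  · refine Finset.prod_ne_zero_iff.2 fun r _ => ?_
    exact Nat.cast_ne_zero.2 (by omega)
  · refine inv_ne_zero (Finset.prod_ne_zero_iff.2 fun r _ => ?_)
    exact Nat.cast_ne_zero.2 (by omega)

lemma ySol_symm (i j : ℕ) : ySol i j = (ySol j i)⁻¹ := by
  unfold ySol
  rcases lt_trichotomy i j with h | h | h
  · rw [if_neg h.ne, if_pos h, if_neg h.ne', if_neg (by omega), inv_inv]
  · subst h; simp
  · rw [if_neg h.ne', if_neg (by omega), if_neg h.ne, if_pos h]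

lemma ySol_succ {i j : ℕ} (hi : 1 ≤ i) (hj : 1 ≤ j) :
    ySol i (j + 1) = ((2 * j : ℕ) : ℂ) * ySol i j := by
  have h2j : ((2 * j : ℕ) : ℂ) ≠ 0 := Nat.cast_ne_zero.2 (by omega)
  rcases lt_trichotomy i j with h | h | h
  · unfold ySol
    rw [if_neg (by omega), if_pos (by omega), if_neg (by omega), if_pos h]
    have h1 : j + 1 - i = (j - i) + 1 := by omega
    rw [h1, Finset.prod_range_succ]
    have h2 : 2 * i + 2 * (j - i) = 2 * j := by omega
    rw [h2]; ring
  · subst h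
    unfold ySol
    rw [if_neg (by omega), if_pos (by omega), if_pos rfl]
    have h1 : i + 1 - i = 1 := by omega
    rw [h1, Finset.prod_range_one]
    norm_num
  · rcases Nat.lt_or_ge (j + 1) i with h' | h'
    · unfold ySol
      rw [if_neg (by omega), if_neg (by omega), if_neg (by omega), if_neg (by omega)]
      have h1 : i - j = (i - (j + 1)) + 1 := by omega
      rw [h1, Finset.prod_range_succ']
      have h2 : ∀ x ∈ Finset.range (i - (j + 1)),
          ((2 * j + 2 * (x + 1) : ℕ) : ℂ) = ((2 * (j + 1) + 2 * x : ℕ) : ℂ) := by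
        intro x _; congr 1; omega
      rw [Finset.prod_congr rfl h2]
      have h3 : ((2 * j + 2 * 0 : ℕ) : ℂ) = ((2 * j : ℕ) : ℂ) := by norm_num
      rw [mul_inv, h3, mul_comm _ (((2 * j : ℕ) : ℂ))⁻¹, ← mul_assoc,
        mul_inv_cancel₀ h2j, one_mul]
    · have h1 : i = j + 1 := by omega
      subst h1
      unfold ySol
      rw [if_pos rfl, if_neg (by omega), if_neg (by omega)]
      have h3 : j + 1 - j = 1 := by omega
      rw [h3, Finset.prod_range_one, Nat.mul_zero, Nat.add_zero]
      rw [mul_inv_cancel₀ h2j]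

lemma ySol_ratio1 {i j : ℕ} (hi : 1 ≤ i) (hj : 1 ≤ j) :
    ySol i (j + 1) / ySol i j = ((2 * j : ℕ) : ℂ) := by
  rw [ySol_succ hi hj, mul_div_assoc, div_self (ySol_ne_zero hi hj), mul_one]

lemma ySol_ratio2 {i j : ℕ} (hi : 1 ≤ i) (hj : 1 ≤ j) :
    ySol i j / ySol (i + 1) j = ((2 * i : ℕ) : ℂ) := by
  rw [ySol_symm i j, ySol_symm (i + 1) j, inv_div_inv]
  exact ySol_ratio1 hj hi

/-- For `1 ≤ i, j` with `i + j ≤ m + 1`, the numbers `ySol i j` are nonzero, satisfy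
`y_{i,j} = (y_{j,i})⁻¹`, and for `i + j ≤ m` they solve the leading-term relation
`−y_{i,j+1}/y_{i,j} − y_{i−1,j}/y_{i,j} + y_{i,j}/y_{i+1,j} + y_{i,j}/y_{i,j−1} = 0`,
where terms with an index equal to `0` are interpreted as `0`. -/
theorem stmt9 (m : ℕ) (hm : 1 ≤ m) :
    (∀ i j, 1 ≤ i → 1 ≤ j → i + j ≤ m + 1 → ySol i j ≠ 0) ∧
    (∀ i j, 1 ≤ i → 1 ≤ j → i + j ≤ m + 1 → ySol i j = (ySol j i)⁻¹) ∧
    (∀ i j, 1 ≤ i → 1 ≤ j → i + j ≤ m →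
      -(ySol i (j + 1) / ySol i j)
        - (if i = 1 then 0 else ySol (i - 1) j / ySol i j)
        + ySol i j / ySol (i + 1) j
        + (if j = 1 then 0 else ySol i j / ySol i (j - 1)) = 0) := by
  refine ⟨fun i j hi hj _ => ySol_ne_zero hi hj,
    fun i j _ _ _ => ySol_symm i j, fun i j hi hj _ => ?_⟩
  have e1 : ySol i (j + 1) / ySol i j = ((2 * j : ℕ) : ℂ) := ySol_ratio1 hi hj
  have e2 : ySol i j / ySol (i + 1) j = ((2 * i : ℕ) : ℂ) := ySol_ratio2 hi hj
  have e3 : (if i = 1 then (0 : ℂ) else ySol (i - 1) j / ySol i j)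
      = ((2 * (i - 1) : ℕ) : ℂ) := by
    rcases eq_or_lt_of_le hi with h | h
    · rw [if_pos h.symm, ← h]; norm_num
    · rw [if_neg (by omega)]
      have hi1 : 1 ≤ i - 1 := by omega
      have := ySol_ratio2 hi1 hj
      rwa [Nat.sub_add_cancel hi] at this
  have e4 : (if j = 1 then (0 : ℂ) else ySol i j / ySol i (j - 1))
      = ((2 * (j - 1) : ℕ) : ℂ) := by
    rcases eq_or_lt_of_le hj with h | h
    · rw [if_pos h.symm, ← h]; norm_num
    · rw [if_neg (by omega)]
      have hj1 : 1 ≤ j - 1 := by omega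
      have := ySol_ratio1 hi hj1
      rwa [Nat.sub_add_cancel hj] at this
  rw [e1, e2, e3, e4]
  have hcast : ∀ k : ℕ, 1 ≤ k → ((2 * (k - 1) : ℕ) : ℂ) = 2 * k - 2 := by
    intro k hk
    have : 2 * (k - 1) = 2 * k - 2 := by omega
    rw [this, Nat.cast_sub (by omega)]
    push_cast; ring
  rw [hcast i hi, hcast j hj]
  push_cast; ring
end

section
/- With notation as in the symmetric-solution construction: given nonzero complex numbers y_{i,j} for i + j ≤ m + 1 in B(m) = {1,…,m}² satisfying y_{i,j} = (y_{j,i})^{−1} and the system ∂_m(i,j)(y) = 0 for i + j ≤ m, define y_{i,j} := (−1)^{i+j−m−1} y_{m+1−j, m+1−i} for (i,j) ∈ B(m) with i + j > m + 1. Then the extended family satisfies ∂_m(i,j)(y) = 0 for all (i,j) ∈ B(m), y_{i,j}·y_{j,i} = 1 for all (i,j) ∈ B(m), and y_{i,i} = ±1 for all i. -/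
/-- The leading-term operator `∂_m(i,j)(y)` within the box `B(m)`, with the boundary
conventions that the terms involving `y_{0,j}` or `y_{i,m+1}` are `0` and the terms
dividing by `y_{i,0}` or `y_{m+1,j}` are `0` (1-based indices). -/
noncomputable def ltDer (m : ℕ) (y : ℕ → ℕ → ℂ) (i j : ℕ) : ℂ :=
  (if j < m then -(y i (j + 1) / y i j) else 0)
    + (if 1 < i then -(y (i - 1) j / y i j) else 0)
    + (if i < m then y i j / y (i + 1) j else 0)
    + (if 1 < j then y i j / y i (j - 1) else 0)

/-- Suppose the nonzero numbers `y_{i,j}` for `i + j ≤ m + 1` in `B(m)` satisfy the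
symmetry `y_{i,j} = (y_{j,i})⁻¹` and `∂_m(i,j)(y) = 0` for `i + j ≤ m`, and the family is
extended by `y_{i,j} = (−1)^{i+j−m−1} · y_{m+1−j, m+1−i}` for `i + j > m + 1`. Then the
extended family satisfies `∂_m(i,j)(y) = 0` on all of `B(m)`, `y_{i,j}·y_{j,i} = 1` on
`B(m)`, and `y_{i,i} = ±1`. -/
theorem stmt11 (m : ℕ) (y : ℕ → ℕ → ℂ)
    (hy0 : ∀ i j, 1 ≤ i → i ≤ m → 1 ≤ j → j ≤ m → i + j ≤ m + 1 → y i j ≠ 0)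
    (hsym : ∀ i j, 1 ≤ i → i ≤ m → 1 ≤ j → j ≤ m → i + j ≤ m + 1 → y i j = (y j i)⁻¹)
    (hsol : ∀ i j, 1 ≤ i → i ≤ m → 1 ≤ j → j ≤ m → i + j ≤ m → ltDer m y i j = 0)
    (hext : ∀ i j, 1 ≤ i → i ≤ m → 1 ≤ j → j ≤ m → m + 1 < i + j →
      y i j = (-1 : ℂ) ^ (i + j - (m + 1)) * y (m + 1 - j) (m + 1 - i)) :
    (∀ i j, 1 ≤ i → i ≤ m → 1 ≤ j → j ≤ m → ltDer m y i j = 0) ∧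
    (∀ i j, 1 ≤ i → i ≤ m → 1 ≤ j → j ≤ m → y i j * y j i = 1) ∧
    (∀ i, 1 ≤ i → i ≤ m → y i i = 1 ∨ y i i = -1) := by
  -- Global reflection symmetry (with a sign of fixed parity, valid on all of B(m)).
  have hrefl : ∀ i j, 1 ≤ i → i ≤ m → 1 ≤ j → j ≤ m →
      y i j = (-1 : ℂ) ^ (i + j + m + 1) * y (m + 1 - j) (m + 1 - i) := by
    intro i j hi1 him hj1 hjm
    rcases lt_trichotomy (i + j) (m + 1) with h | h | h
    · have h1 : m + 1 < (m + 1 - j) + (m + 1 - i) := by omega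
      have h2 := hext (m + 1 - j) (m + 1 - i) (by omega) (by omega) (by omega) (by omega) h1
      rw [show m + 1 - (m + 1 - i) = i from by omega,
          show m + 1 - (m + 1 - j) = j from by omega,
          show (m + 1 - j) + (m + 1 - i) - (m + 1) = m + 1 - i - j from by omega] at h2
      rw [h2, ← mul_assoc, ← pow_add,
          show i + j + m + 1 + (m + 1 - i - j) = 2 * (m + 1) from by omega,
          pow_mul, neg_one_sq, one_pow, one_mul]
    · rw [show m + 1 - j = i from by omega, show m + 1 - i = j from by omega,
          show i + j + m + 1 = 2 * (m + 1) from by omega, pow_mul, neg_one_sq, one_pow,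
          one_mul]
    · have h2 := hext i j hi1 him hj1 hjm h
      rw [h2, show i + j + m + 1 = (i + j - (m + 1)) + 2 * (m + 1) from by omega,
          pow_add, pow_mul, neg_one_sq, one_pow, mul_one]
  -- Two algebraic helpers: cancelling a common sign factor in a quotient.
  have key : ∀ (n n' : ℕ), n' = n + 1 → ∀ A B : ℂ,
      ((-1 : ℂ) ^ n' * A) / ((-1 : ℂ) ^ n * B) = -(A / B) := by
    intro n n' h A B
    subst h
    rw [pow_succ, mul_assoc, mul_div_mul_left _ _ (pow_ne_zero n (by norm_num : (-1:ℂ) ≠ 0)),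
        neg_one_mul, neg_div]
  have key2 : ∀ (n n' : ℕ), n' = n + 1 → ∀ A B : ℂ,
      ((-1 : ℂ) ^ n * A) / ((-1 : ℂ) ^ n' * B) = -(A / B) := by
    intro n n' h A B
    subst h
    rw [pow_succ, mul_assoc, mul_div_mul_left _ _ (pow_ne_zero n (by norm_num : (-1:ℂ) ≠ 0)),
        neg_one_mul, div_neg]
  -- The operator flips sign under reflection.
  have hflip : ∀ i j, 1 ≤ i → i ≤ m → 1 ≤ j → j ≤ m →
      ltDer m y i j = - ltDer m y (m + 1 - j) (m + 1 - i) := by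
    intro i j hi1 him hj1 hjm
    have e1 : (if j < m then -(y i (j + 1) / y i j) else 0)
        = -(if 1 < m + 1 - j then
            -(y (m + 1 - j - 1) (m + 1 - i) / y (m + 1 - j) (m + 1 - i)) else 0) := by
      by_cases h : j < m
      · rw [if_pos h, if_pos (show 1 < m + 1 - j by omega),
            hrefl i (j + 1) hi1 him (by omega) (by omega), hrefl i j hi1 him hj1 hjm,
            show m + 1 - (j + 1) = m + 1 - j - 1 from by omega,
            key (i + j + m + 1) (i + (j + 1) + m + 1) (by omega)]
      · rw [if_neg h, if_neg (show ¬ 1 < m + 1 - j by omega), neg_zero]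
    have e2 : (if 1 < i then -(y (i - 1) j / y i j) else 0)
        = -(if m + 1 - i < m then
            -(y (m + 1 - j) (m + 1 - i + 1) / y (m + 1 - j) (m + 1 - i)) else 0) := by
      by_cases h : 1 < i
      · rw [if_pos h, if_pos (show m + 1 - i < m by omega),
            hrefl (i - 1) j (by omega) (by omega) hj1 hjm, hrefl i j hi1 him hj1 hjm,
            show m + 1 - (i - 1) = m + 1 - i + 1 from by omega,
            key2 (i - 1 + j + m + 1) (i + j + m + 1) (by omega)]
      · rw [if_neg h, if_neg (show ¬ m + 1 - i < m by omega), neg_zero]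
    have e3 : (if i < m then y i j / y (i + 1) j else 0)
        = -(if 1 < m + 1 - i then
            y (m + 1 - j) (m + 1 - i) / y (m + 1 - j) (m + 1 - i - 1) else 0) := by
      by_cases h : i < m
      · rw [if_pos h, if_pos (show 1 < m + 1 - i by omega),
            hrefl i j hi1 him hj1 hjm, hrefl (i + 1) j (by omega) (by omega) hj1 hjm,
            show m + 1 - (i + 1) = m + 1 - i - 1 from by omega,
            key2 (i + j + m + 1) (i + 1 + j + m + 1) (by omega)]
      · rw [if_neg h, if_neg (show ¬ 1 < m + 1 - i by omega), neg_zero]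
    have e4 : (if 1 < j then y i j / y i (j - 1) else 0)
        = -(if m + 1 - j < m then
            y (m + 1 - j) (m + 1 - i) / y (m + 1 - j + 1) (m + 1 - i) else 0) := by
      by_cases h : 1 < j
      · rw [if_pos h, if_pos (show m + 1 - j < m by omega),
            hrefl i j hi1 him hj1 hjm, hrefl i (j - 1) hi1 him (by omega) (by omega),
            show m + 1 - (j - 1) = m + 1 - j + 1 from by omega,
            key (i + (j - 1) + m + 1) (i + j + m + 1) (by omega)]
      · rw [if_neg h, if_neg (show ¬ m + 1 - j < m by omega), neg_zero]
    unfold ltDer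
    rw [e1, e2, e3, e4]
    ring
  -- First conclusion: the full system of equations holds.
  have hsolve : ∀ i j, 1 ≤ i → i ≤ m → 1 ≤ j → j ≤ m → ltDer m y i j = 0 := by
    intro i j hi1 him hj1 hjm
    by_cases h : i + j ≤ m
    · exact hsol i j hi1 him hj1 hjm h
    · by_cases h2 : i + j = m + 1
      · have hf := hflip i j hi1 him hj1 hjm
        rw [show m + 1 - j = i from by omega, show m + 1 - i = j from by omega] at hf
        linear_combination hf / 2
      · rw [hflip i j hi1 him hj1 hjm,
            hsol (m + 1 - j) (m + 1 - i) (by omega) (by omega) (by omega) (by omega)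
              (by omega), neg_zero]
  -- Second conclusion: products are 1.
  have hprod : ∀ i j, 1 ≤ i → i ≤ m → 1 ≤ j → j ≤ m → y i j * y j i = 1 := by
    intro i j hi1 him hj1 hjm
    by_cases h : i + j ≤ m + 1
    · rw [hsym i j hi1 him hj1 hjm h]
      exact inv_mul_cancel₀ (hy0 j i hj1 hjm hi1 him (by omega))
    · rw [hrefl i j hi1 him hj1 hjm, hrefl j i hj1 hjm hi1 him]
      have hs : (-1 : ℂ) ^ (i + j + m + 1) * (-1 : ℂ) ^ (j + i + m + 1) = 1 := by
        rw [← pow_add, show i + j + m + 1 + (j + i + m + 1) = 2 * (i + j + m + 1) from by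
          omega, pow_mul, neg_one_sq, one_pow]
      have h1 : y (m + 1 - j) (m + 1 - i) * y (m + 1 - i) (m + 1 - j) = 1 := by
        rw [hsym (m + 1 - j) (m + 1 - i) (by omega) (by omega) (by omega) (by omega)
          (by omega)]
        exact inv_mul_cancel₀
          (hy0 (m + 1 - i) (m + 1 - j) (by omega) (by omega) (by omega) (by omega) (by omega))
      rw [mul_mul_mul_comm, hs, h1, one_mul]
  refine ⟨hsolve, hprod, ?_⟩
  intro i hi1 him
  exact mul_self_eq_one_iff.mp (hprod i i hi1 him hi1 him)
end

section
/- Let γ be a face of the ladder diagram Γ_λ (a subgraph of the grid graph containing all top vertices and expressible as a union of positive paths). If two L-shaped blocks L_i(a,b) and L_j(c,d) are both rigid in γ and (i,a,b) ≠ (j,c,d), then their interiors are disjoint: int L_i(a,b) ∩ int L_j(c,d) = ∅. -/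
/-- The closed unit box `□^{(a,b)}` with top-right vertex `(a, b)`. -/
def unitBox (a b : ℤ) : Set (ℝ × ℝ) :=
  Set.Icc ((a : ℝ) - 1) (a : ℝ) ×ˢ Set.Icc ((b : ℝ) - 1) (b : ℝ)

/-- The `k`-th L-shaped block at `(p, q)`: the union of the boxes `□^{(p+s,q)}` and
`□^{(p,q+s)}` for `0 ≤ s ≤ k − 1`. -/
def Lblock (k : ℕ) (p q : ℤ) : Set (ℝ × ℝ) :=
  (⋃ s ∈ Finset.range k, unitBox (p + s) q) ∪ ⋃ s ∈ Finset.range k, unitBox p (q + s)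

/-- A lattice point regarded as a point of the plane. -/
def toPlane (v : ℤ × ℤ) : ℝ × ℝ := ((v.1 : ℝ), (v.2 : ℝ))

/-- The vertex set of the ladder diagram `Γ(n₁, …, n_r; n)`, where `ns 0 = 0 < ns 1 < … <
ns (r+1) = n`: the union over `j` of the lattice rectangles `[n_j, n_{j+1}] × [0, n − n_{j+1}]`. -/
def ladderVertices (r n : ℕ) (ns : ℕ → ℕ) : Set (ℤ × ℤ) :=
  {v | ∃ j ≤ r, (ns j : ℤ) ≤ v.1 ∧ v.1 ≤ (ns (j + 1) : ℤ) ∧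
    0 ≤ v.2 ∧ v.2 ≤ (n : ℤ) - (ns (j + 1) : ℤ)}

/-- A positive path: a shortest lattice path (steps `+(1,0)` or `+(0,1)`) from the origin
to a top vertex (a vertex at taxicab distance `n`), staying in the vertex set `V`. -/
def IsPositivePath (V : Set (ℤ × ℤ)) (n : ℕ) (p : ℕ → ℤ × ℤ) : Prop :=
  p 0 = (0, 0) ∧
  (∀ s < n, p (s + 1) = p s + (1, 0) ∨ p (s + 1) = p s + (0, 1)) ∧
  (∀ s ≤ n, p s ∈ V)

/-- `(v, w)` is an edge of the face `γ` represented as a set `P` of positive paths. -/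
def IsEdgeOf (P : Set (ℕ → ℤ × ℤ)) (n : ℕ) (v w : ℤ × ℤ) : Prop :=
  ∃ p ∈ P, ∃ s < n, p s = v ∧ p (s + 1) = w

/-- The L-block `L_k(p,q)` is rigid in the face represented by the set of positive paths
`P`: no edge of the face lies in the interior of the block (an edge "lies in the
interior" when its open segment is contained in the interior), and the rightmost edge
and the top edge of the block are edges of the face. -/
def IsRigid (P : Set (ℕ → ℤ × ℤ)) (n : ℕ) (k : ℕ) (p q : ℤ) : Prop :=
  (∀ v w, IsEdgeOf P n v w →
      ¬ openSegment ℝ (toPlane v) (toPlane w) ⊆ interior (Lblock k p q)) ∧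
  IsEdgeOf P n (p + k - 1, q - 1) (p + k - 1, q) ∧
  IsEdgeOf P n (p - 1, q + k - 1) (p, q + k - 1)

lemma seg_h (x y : ℝ) :
    openSegment ℝ ((x, y) : ℝ × ℝ) (x + 1, y) =
      {z : ℝ × ℝ | x < z.1 ∧ z.1 < x + 1 ∧ z.2 = y} := by
  ext ⟨u, w⟩
  constructor
  · rintro ⟨A, B, hA, hB, hAB, h⟩
    obtain rfl : A = 1 - B := by linarith
    simp only [Prod.smul_mk, Prod.mk_add_mk, Prod.mk.injEq, smul_eq_mul] at h
    obtain ⟨h1, h2⟩ := h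
    refine ⟨by nlinarith, by nlinarith, by nlinarith⟩
  · rintro ⟨h1, h2, rfl⟩
    refine ⟨x + 1 - u, u - x, by linarith, by linarith, by ring, ?_⟩
    simp only [Prod.smul_mk, Prod.mk_add_mk, Prod.mk.injEq, smul_eq_mul]
    constructor <;> ring

lemma seg_v (x y : ℝ) :
    openSegment ℝ ((x, y) : ℝ × ℝ) (x, y + 1) =
      {z : ℝ × ℝ | z.1 = x ∧ y < z.2 ∧ z.2 < y + 1} := by
  ext ⟨u, w⟩
  constructor
  · rintro ⟨A, B, hA, hB, hAB, h⟩
    obtain rfl : A = 1 - B := by linarith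
    simp only [Prod.smul_mk, Prod.mk_add_mk, Prod.mk.injEq, smul_eq_mul] at h
    obtain ⟨h1, h2⟩ := h
    refine ⟨by nlinarith, by nlinarith, by nlinarith⟩
  · rintro ⟨rfl, h2, h3⟩
    refine ⟨y + 1 - w, w - y, by linarith, by linarith, by ring, ?_⟩
    simp only [Prod.smul_mk, Prod.mk_add_mk, Prod.mk.injEq, smul_eq_mul]
    constructor <;> ring

/-- The open L-shape: the interior of `Lblock k p q`. -/
def openL (k : ℕ) (p q : ℤ) : Set (ℝ × ℝ) :=
  (Set.Ioo ((p : ℝ) - 1) ((p : ℝ) + (k : ℝ) - 1) ×ˢ Set.Ioo ((q : ℝ) - 1) (q : ℝ)) ∪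
  (Set.Ioo ((p : ℝ) - 1) (p : ℝ) ×ˢ Set.Ioo ((q : ℝ) - 1) ((q : ℝ) + (k : ℝ) - 1))

lemma mem_Lblock_h {k : ℕ} {p q : ℤ} {z : ℝ × ℝ} (hx1 : (p : ℝ) - 1 < z.1)
    (hx2 : z.1 < (p : ℝ) + (k : ℝ) - 1) (hy1 : (q : ℝ) - 1 ≤ z.2) (hy2 : z.2 ≤ (q : ℝ)) :
    z ∈ Lblock k p q := by
  refine Set.mem_union_left _ ?_
  set m := ⌈z.1⌉ with hm
  have hzm : z.1 ≤ (m : ℝ) := Int.le_ceil z.1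
  have hmz : (m : ℝ) < z.1 + 1 := Int.ceil_lt_add_one z.1
  have hm1 : p ≤ m := by
    have : (p : ℝ) - 1 < (m : ℝ) := lt_of_lt_of_le hx1 hzm
    have : ((p - 1 : ℤ) : ℝ) < (m : ℝ) := by push_cast; linarith
    have := (by exact_mod_cast this : p - 1 < m)
    omega
  have hm2 : m ≤ p + (k : ℤ) - 1 := by
    rw [hm]
    refine Int.ceil_le.2 ?_
    push_cast
    linarith
  have hnn : (0 : ℤ) ≤ m - p := by omega
  refine Set.mem_iUnion₂.2 ⟨(m - p).toNat, Finset.mem_range.2 (by omega), ?_⟩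
  have hcast : (((m - p).toNat : ℤ) : ℝ) = (m : ℝ) - (p : ℝ) := by
    rw [Int.toNat_of_nonneg hnn]; push_cast; ring
  constructor
  · constructor
    · show ((p + ((m - p).toNat : ℤ) : ℤ) : ℝ) - 1 ≤ z.1
      push_cast [Int.toNat_of_nonneg hnn]
      linarith
    · show z.1 ≤ ((p + ((m - p).toNat : ℤ) : ℤ) : ℝ)
      push_cast [Int.toNat_of_nonneg hnn]
      linarith
  · exact ⟨hy1, hy2⟩

lemma mem_Lblock_v {k : ℕ} {p q : ℤ} {z : ℝ × ℝ} (hx1 : (p : ℝ) - 1 ≤ z.1)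
    (hx2 : z.1 ≤ (p : ℝ)) (hy1 : (q : ℝ) - 1 < z.2) (hy2 : z.2 < (q : ℝ) + (k : ℝ) - 1) :
    z ∈ Lblock k p q := by
  refine Set.mem_union_right _ ?_
  set m := ⌈z.2⌉ with hm
  have hzm : z.2 ≤ (m : ℝ) := Int.le_ceil z.2
  have hmz : (m : ℝ) < z.2 + 1 := Int.ceil_lt_add_one z.2
  have hm1 : q ≤ m := by
    have : ((q - 1 : ℤ) : ℝ) < (m : ℝ) := by push_cast; linarith
    have := (by exact_mod_cast this : q - 1 < m)
    omega
  have hm2 : m ≤ q + (k : ℤ) - 1 := by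
    rw [hm]
    refine Int.ceil_le.2 ?_
    push_cast
    linarith
  have hnn : (0 : ℤ) ≤ m - q := by omega
  refine Set.mem_iUnion₂.2 ⟨(m - q).toNat, Finset.mem_range.2 (by omega), ?_⟩
  constructor
  · exact ⟨hx1, hx2⟩
  · constructor
    · show ((q + ((m - q).toNat : ℤ) : ℤ) : ℝ) - 1 ≤ z.2
      push_cast [Int.toNat_of_nonneg hnn]
      linarith
    · show z.2 ≤ ((q + ((m - q).toNat : ℤ) : ℤ) : ℝ)
      push_cast [Int.toNat_of_nonneg hnn]
      linarith

lemma openL_subset_Lblock (k : ℕ) (p q : ℤ) : openL k p q ⊆ Lblock k p q := by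
  rintro z (⟨⟨hx1, hx2⟩, ⟨hy1, hy2⟩⟩ | ⟨⟨hx1, hx2⟩, ⟨hy1, hy2⟩⟩)
  · exact mem_Lblock_h hx1 hx2 hy1.le hy2.le
  · exact mem_Lblock_v hx1.le hx2.le hy1 hy2

lemma isOpen_openL (k : ℕ) (p q : ℤ) : IsOpen (openL k p q) :=
  ((isOpen_Ioo.prod isOpen_Ioo).union (isOpen_Ioo.prod isOpen_Ioo))

lemma Lblock_subset_closed (k : ℕ) (p q : ℤ) :
    Lblock k p q ⊆
      (Set.Icc ((p : ℝ) - 1) ((p : ℝ) + (k : ℝ) - 1) ×ˢ Set.Icc ((q : ℝ) - 1) (q : ℝ)) ∪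
      (Set.Icc ((p : ℝ) - 1) (p : ℝ) ×ˢ Set.Icc ((q : ℝ) - 1) ((q : ℝ) + (k : ℝ) - 1)) := by
  rintro z (hz | hz) <;> obtain ⟨s, hs, hb⟩ := Set.mem_iUnion₂.1 hz <;>
    rw [Finset.mem_range] at hs <;> obtain ⟨⟨h1, h2⟩, h3, h4⟩ := hb
  · refine Set.mem_union_left _ ⟨⟨?_, ?_⟩, ?_, ?_⟩ <;> push_cast at h1 h2 ⊢ <;>
      [skip; skip; exact h3; exact h4]
    · have : (0:ℝ) ≤ (s:ℝ) := by positivity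
      linarith
    · have : (s:ℝ) ≤ (k:ℝ) - 1 := by
        have : (s:ℝ) + 1 ≤ (k:ℝ) := by exact_mod_cast hs
        linarith
      linarith
  · refine Set.mem_union_right _ ⟨⟨h1, h2⟩, ?_, ?_⟩ <;> push_cast at h3 h4 ⊢
    · have : (0:ℝ) ≤ (s:ℝ) := by positivity
      linarith
    · have : (s:ℝ) ≤ (k:ℝ) - 1 := by
        have : (s:ℝ) + 1 ≤ (k:ℝ) := by exact_mod_cast hs
        linarith
      linarith

lemma interior_Lblock (k : ℕ) (p q : ℤ) : interior (Lblock k p q) = openL k p q := by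
  apply Set.Subset.antisymm
  · intro z hz
    obtain ⟨ε, hε, hball⟩ := Metric.mem_nhds_iff.1 (mem_interior_iff_mem_nhds.1 hz)
    have hmem : ∀ w : ℝ × ℝ, dist w z < ε →
        w ∈ (Set.Icc ((p : ℝ) - 1) ((p : ℝ) + (k : ℝ) - 1) ×ˢ Set.Icc ((q : ℝ) - 1) (q : ℝ)) ∪
          (Set.Icc ((p : ℝ) - 1) (p : ℝ) ×ˢ Set.Icc ((q : ℝ) - 1) ((q : ℝ) + (k : ℝ) - 1)) :=
      fun w hw => Lblock_subset_closed k p q (hball hw)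
    have hd : ∀ u v : ℝ, dist ((z.1 + u, z.2 + v) : ℝ × ℝ) z = max |u| |v| := by
      intro u v
      rw [Prod.dist_eq]
      simp [Real.dist_eq]
    have hδ : max |ε/2| |(0:ℝ)| < ε ∧ max |ε/2| |ε/2| < ε ∧ max |(0:ℝ)| |ε/2| < ε := by
      rw [abs_of_pos (by linarith), abs_of_nonneg le_rfl]
      refine ⟨?_, ?_, ?_⟩ <;> simp <;> linarith
    have key1 := hmem (z.1 + ε/2, z.2 + ε/2) (by rw [hd]; exact hδ.2.1)
    have key2 := hmem (z.1 + (-(ε/2)), z.2 + 0) (by rw [hd]; simpa using hδ.1)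
    have key3 := hmem (z.1 + 0, z.2 + (-(ε/2))) (by rw [hd]; simpa using hδ.1)
    have hx1 : (p : ℝ) - 1 < z.1 := by
      rcases key2 with ⟨⟨h, _⟩, _⟩ | ⟨⟨h, _⟩, _⟩ <;> simp only at h <;> linarith
    have hy1 : (q : ℝ) - 1 < z.2 := by
      rcases key3 with ⟨_, ⟨h, _⟩⟩ | ⟨_, ⟨h, _⟩⟩ <;> simp only at h <;> linarith
    rcases key1 with ⟨⟨_, h2⟩, _, h4⟩ | ⟨⟨_, h2⟩, _, h4⟩ <;> simp only at h2 h4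
    · exact Or.inl ⟨⟨hx1, by linarith⟩, hy1, by linarith⟩
    · exact Or.inr ⟨⟨hx1, by linarith⟩, hy1, by linarith⟩
  · exact interior_maximal (openL_subset_Lblock k p q) (isOpen_openL k p q)

lemma seg_of_hstep (v : ℤ × ℤ) :
    openSegment ℝ (toPlane v) (toPlane (v + (1, 0))) =
      {z : ℝ × ℝ | (v.1 : ℝ) < z.1 ∧ z.1 < (v.1 : ℝ) + 1 ∧ z.2 = (v.2 : ℝ)} := by
  have h1 : toPlane v = (((v.1 : ℝ)), ((v.2 : ℝ))) := rfl
  have h2 : toPlane (v + (1, 0)) = (((v.1 : ℝ) + 1), ((v.2 : ℝ))) := by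
    simp [toPlane, Prod.fst_add, Prod.snd_add]
  rw [h1, h2, seg_h]

lemma seg_of_vstep (v : ℤ × ℤ) :
    openSegment ℝ (toPlane v) (toPlane (v + (0, 1))) =
      {z : ℝ × ℝ | z.1 = (v.1 : ℝ) ∧ (v.2 : ℝ) < z.2 ∧ z.2 < (v.2 : ℝ) + 1} := by
  have h1 : toPlane v = (((v.1 : ℝ)), ((v.2 : ℝ))) := rfl
  have h2 : toPlane (v + (0, 1)) = (((v.1 : ℝ)), ((v.2 : ℝ) + 1)) := by
    simp [toPlane, Prod.fst_add, Prod.snd_add]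
  rw [h1, h2, seg_v]

/-- Walking back from a vertex strictly inside the square forces an edge through the
interior of the L-block, contradicting rigidity. -/
lemma walk_back {P : Set (ℕ → ℤ × ℤ)} {n k : ℕ} {p q : ℤ}
    (hr1 : ∀ v w, IsEdgeOf P n v w →
      ¬ openSegment ℝ (toPlane v) (toPlane w) ⊆ interior (Lblock k p q))
    (hq : 1 ≤ q) {π : ℕ → ℤ × ℤ} (hπ : π ∈ P) (h0 : π 0 = (0, 0))
    (hstep : ∀ s < n, π (s + 1) = π s + (1, 0) ∨ π (s + 1) = π s + (0, 1)) :
    ∀ s, s ≤ n → p ≤ (π s).1 → (π s).1 ≤ p + (k : ℤ) - 2 → q ≤ (π s).2 →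
      (π s).2 ≤ q + (k : ℤ) - 2 → False := by
  intro s
  induction s with
  | zero =>
    intro _ _ _ h3 _
    rw [h0] at h3
    simp at h3
    omega
  | succ s ih =>
    intro hsn h1 h2 h3 h4
    have hs : s < n := hsn
    rcases hstep s hs with h | h
    · have e1 : (π (s + 1)).1 = (π s).1 + 1 := by rw [h]; rfl
      have e2 : (π (s + 1)).2 = (π s).2 := by rw [h]; simp
      have h3' : q ≤ (π s).2 := by omega
      have h4' : (π s).2 ≤ q + (k : ℤ) - 2 := by omega
      by_cases hc : p ≤ (π s).1
      · exact ih (le_of_lt hsn) hc (by omega) h3' h4'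
      · have hx : (π s).1 = p - 1 := by omega
        refine hr1 (π s) (π (s + 1)) ⟨π, hπ, s, hs, rfl, rfl⟩ ?_
        rw [h, seg_of_hstep, interior_Lblock]
        rintro z ⟨hz1, hz2, hz3⟩
        refine Set.mem_union_right _ ⟨⟨?_, ?_⟩, ?_, ?_⟩
        · rw [hx] at hz1; push_cast at hz1; linarith
        · rw [hx] at hz2; push_cast at hz2; linarith
        · rw [hz3]
          have : ((q : ℝ)) ≤ ((π s).2 : ℝ) := by exact_mod_cast h3'
          linarith
        · rw [hz3]
          have : ((π s).2 : ℝ) ≤ (q : ℝ) + (k : ℝ) - 2 := by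
            have := h4'; push_cast at this ⊢; exact_mod_cast this
          linarith
    · have e1 : (π (s + 1)).1 = (π s).1 := by rw [h]; simp
      have e2 : (π (s + 1)).2 = (π s).2 + 1 := by rw [h]; rfl
      have h1' : p ≤ (π s).1 := by omega
      have h2' : (π s).1 ≤ p + (k : ℤ) - 2 := by omega
      by_cases hc : q ≤ (π s).2
      · exact ih (le_of_lt hsn) h1' h2' hc (by omega)
      · have hy : (π s).2 = q - 1 := by omega
        refine hr1 (π s) (π (s + 1)) ⟨π, hπ, s, hs, rfl, rfl⟩ ?_
        rw [h, seg_of_vstep, interior_Lblock]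
        rintro z ⟨hz1, hz2, hz3⟩
        refine Set.mem_union_left _ ⟨⟨?_, ?_⟩, ?_, ?_⟩
        · rw [hz1]
          have : ((p : ℝ)) ≤ ((π s).1 : ℝ) := by exact_mod_cast h1'
          linarith
        · rw [hz1]
          have : ((π s).1 : ℝ) ≤ (p : ℝ) + (k : ℝ) - 2 := by
            have := h2'; push_cast at this ⊢; exact_mod_cast this
          linarith
        · rw [hy] at hz2; push_cast at hz2; linarith
        · rw [hy] at hz3; push_cast at hz3; linarith

/-- If `L_k(p,q)` is rigid, no edge of the face crosses the interior of the square
`Q_k(p,q)`. -/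
lemma no_edge_in_square {P : Set (ℕ → ℤ × ℤ)} {n k : ℕ} {p q : ℤ}
    (hpath : ∀ π ∈ P, π 0 = (0, 0) ∧
      ∀ s < n, π (s + 1) = π s + (1, 0) ∨ π (s + 1) = π s + (0, 1))
    (hr1 : ∀ v w, IsEdgeOf P n v w →
      ¬ openSegment ℝ (toPlane v) (toPlane w) ⊆ interior (Lblock k p q))
    (hq : 1 ≤ q) :
    ∀ v w, IsEdgeOf P n v w → ¬ openSegment ℝ (toPlane v) (toPlane w) ⊆
      Set.Ioo ((p : ℝ) - 1) ((p : ℝ) + (k : ℝ) - 1) ×ˢ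
        Set.Ioo ((q : ℝ) - 1) ((q : ℝ) + (k : ℝ) - 1) := by
  rintro v w ⟨π, hπ, s, hs, hv, hw⟩ hseg
  obtain ⟨h0, hstep⟩ := hpath π hπ
  subst hv
  rcases hstep s hs with h | h
  · rw [hw] at h
    rw [h, seg_of_hstep] at hseg
    have hmid := hseg (show (((π s).1 : ℝ) + 1/2, ((π s).2 : ℝ)) ∈ _ from
      ⟨by linarith, by linarith, rfl⟩)
    obtain ⟨⟨m1, m2⟩, m3, m4⟩ := hmid
    simp only at m1 m2 m3 m4
    have b1 : p - 2 < (π s).1 := by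
      have : ((p - 2 : ℤ) : ℝ) < ((π s).1 : ℝ) := by push_cast; linarith
      exact_mod_cast this
    have b2 : (π s).1 < p + (k : ℤ) - 1 := by
      have : (((π s).1 : ℤ) : ℝ) < ((p + (k : ℤ) - 1 : ℤ) : ℝ) := by push_cast; linarith
      exact_mod_cast this
    have b3 : q - 1 < (π s).2 := by
      have : ((q - 1 : ℤ) : ℝ) < ((π s).2 : ℝ) := by push_cast; linarith
      exact_mod_cast this
    have b4 : (π s).2 < q + (k : ℤ) - 1 := by
      have : (((π s).2 : ℤ) : ℝ) < ((q + (k : ℤ) - 1 : ℤ) : ℝ) := by push_cast; linarith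
      exact_mod_cast this
    by_cases hc : p ≤ (π s).1
    · exact walk_back hr1 hq hπ h0 hstep s hs.le hc (by omega) (by omega) (by omega)
    · have hx : (π s).1 = p - 1 := by omega
      refine hr1 (π s) w ⟨π, hπ, s, hs, rfl, hw⟩ ?_
      rw [h, seg_of_hstep, interior_Lblock]
      rintro z ⟨hz1, hz2, hz3⟩
      refine Set.mem_union_right _ ⟨⟨?_, ?_⟩, ?_, ?_⟩
      · rw [hx] at hz1; push_cast at hz1; linarith
      · rw [hx] at hz2; push_cast at hz2; linarith
      · rw [hz3]
        have : ((q - 1 : ℤ) : ℝ) < ((π s).2 : ℝ) := by exact_mod_cast b3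
        push_cast at this; linarith
      · rw [hz3]
        have : (((π s).2 : ℤ) : ℝ) < ((q + (k : ℤ) - 1 : ℤ) : ℝ) := by exact_mod_cast b4
        push_cast at this; linarith
  · rw [hw] at h
    rw [h, seg_of_vstep] at hseg
    have hmid := hseg (show (((π s).1 : ℝ), ((π s).2 : ℝ) + 1/2) ∈ _ from
      ⟨rfl, by linarith, by linarith⟩)
    obtain ⟨⟨m1, m2⟩, m3, m4⟩ := hmid
    simp only at m1 m2 m3 m4
    have b1 : p - 1 < (π s).1 := by
      have : ((p - 1 : ℤ) : ℝ) < ((π s).1 : ℝ) := by push_cast; linarith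
      exact_mod_cast this
    have b2 : (π s).1 < p + (k : ℤ) - 1 := by
      have : (((π s).1 : ℤ) : ℝ) < ((p + (k : ℤ) - 1 : ℤ) : ℝ) := by push_cast; linarith
      exact_mod_cast this
    have b3 : q - 2 < (π s).2 := by
      have : ((q - 2 : ℤ) : ℝ) < ((π s).2 : ℝ) := by push_cast; linarith
      exact_mod_cast this
    have b4 : (π s).2 < q + (k : ℤ) - 1 := by
      have : (((π s).2 : ℤ) : ℝ) < ((q + (k : ℤ) - 1 : ℤ) : ℝ) := by push_cast; linarith
      exact_mod_cast this
    by_cases hc : q ≤ (π s).2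
    · exact walk_back hr1 hq hπ h0 hstep s hs.le (by omega) (by omega) hc (by omega)
    · have hy : (π s).2 = q - 1 := by omega
      refine hr1 (π s) w ⟨π, hπ, s, hs, rfl, hw⟩ ?_
      rw [h, seg_of_vstep, interior_Lblock]
      rintro z ⟨hz1, hz2, hz3⟩
      refine Set.mem_union_left _ ⟨⟨?_, ?_⟩, ?_, ?_⟩
      · rw [hz1]
        have : ((p - 1 : ℤ) : ℝ) < ((π s).1 : ℝ) := by exact_mod_cast b1
        push_cast at this; linarith
      · rw [hz1]
        have : (((π s).1 : ℤ) : ℝ) < ((p + (k : ℤ) - 1 : ℤ) : ℝ) := by exact_mod_cast b2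
        push_cast at this; linarith
      · rw [hy] at hz2; push_cast at hz2; linarith
      · rw [hy] at hz3; push_cast at hz3; linarith

lemma seg_R (k : ℕ) (p q : ℤ) :
    openSegment ℝ (toPlane (p + k - 1, q - 1)) (toPlane (p + k - 1, q)) =
      {z : ℝ × ℝ | z.1 = (p : ℝ) + (k : ℝ) - 1 ∧ (q : ℝ) - 1 < z.2 ∧ z.2 < (q : ℝ)} := by
  have h : ((p + (k : ℤ) - 1, q) : ℤ × ℤ) = ((p + k - 1, q - 1) : ℤ × ℤ) + (0, 1) := by
    simp [Prod.ext_iff]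
  rw [h, seg_of_vstep]
  ext z
  simp only [Set.mem_setOf_eq]
  constructor <;> rintro ⟨h1, h2, h3⟩ <;>
    refine ⟨by rw [h1]; push_cast; ring, by push_cast at h2 ⊢; linarith, by push_cast at h3 ⊢; linarith⟩

lemma seg_T (k : ℕ) (p q : ℤ) :
    openSegment ℝ (toPlane (p - 1, q + k - 1)) (toPlane (p, q + k - 1)) =
      {z : ℝ × ℝ | (p : ℝ) - 1 < z.1 ∧ z.1 < (p : ℝ) ∧ z.2 = (q : ℝ) + (k : ℝ) - 1} := by
  have h : ((p, q + (k : ℤ) - 1) : ℤ × ℤ) = ((p - 1, q + k - 1) : ℤ × ℤ) + (1, 0) := by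
    simp [Prod.ext_iff]
  rw [h, seg_of_hstep]
  ext z
  simp only [Set.mem_setOf_eq]
  constructor <;> rintro ⟨h1, h2, h3⟩ <;>
    refine ⟨by push_cast at h1 ⊢; linarith, by push_cast at h2 ⊢; linarith,
      by rw [h3]; push_cast; ring⟩

lemma R_sub_SQ {i j : ℕ} {a b c d : ℤ} (h1 : c < a + i) (h2 : a + i < c + j)
    (h3 : d ≤ b) (h4 : b ≤ d + j - 1) :
    {z : ℝ × ℝ | z.1 = (a : ℝ) + (i : ℝ) - 1 ∧ (b : ℝ) - 1 < z.2 ∧ z.2 < (b : ℝ)} ⊆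
      Set.Ioo ((c : ℝ) - 1) ((c : ℝ) + (j : ℝ) - 1) ×ˢ
        Set.Ioo ((d : ℝ) - 1) ((d : ℝ) + (j : ℝ) - 1) := by
  rintro z ⟨hz1, hz2, hz3⟩
  have H1 : (c : ℝ) + 1 ≤ (a : ℝ) + (i : ℝ) := by exact_mod_cast h1
  have H2 : (a : ℝ) + (i : ℝ) + 1 ≤ (c : ℝ) + (j : ℝ) := by exact_mod_cast h2
  have H3 : (d : ℝ) ≤ (b : ℝ) := by exact_mod_cast h3
  have H4 : (b : ℝ) ≤ (d : ℝ) + (j : ℝ) - 1 := by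
    have : (b : ℝ) + 1 ≤ (d : ℝ) + (j : ℝ) := by exact_mod_cast (by omega : b + 1 ≤ d + (j:ℤ))
    linarith
  exact ⟨⟨by rw [hz1]; linarith, by rw [hz1]; linarith⟩, by linarith, by linarith⟩

lemma T_sub_SQ {i j : ℕ} {a b c d : ℤ} (h1 : c ≤ a) (h2 : a ≤ c + j - 1)
    (h3 : d < b + i) (h4 : b + i < d + j) :
    {z : ℝ × ℝ | (a : ℝ) - 1 < z.1 ∧ z.1 < (a : ℝ) ∧ z.2 = (b : ℝ) + (i : ℝ) - 1} ⊆
      Set.Ioo ((c : ℝ) - 1) ((c : ℝ) + (j : ℝ) - 1) ×ˢ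
        Set.Ioo ((d : ℝ) - 1) ((d : ℝ) + (j : ℝ) - 1) := by
  rintro z ⟨hz1, hz2, hz3⟩
  have H1 : (c : ℝ) ≤ (a : ℝ) := by exact_mod_cast h1
  have H2 : (a : ℝ) + 1 ≤ (c : ℝ) + (j : ℝ) := by
    exact_mod_cast (by omega : a + 1 ≤ c + (j:ℤ))
  have H3 : (d : ℝ) + 1 ≤ (b : ℝ) + (i : ℝ) := by exact_mod_cast h3
  have H4 : (b : ℝ) + (i : ℝ) + 1 ≤ (d : ℝ) + (j : ℝ) := by exact_mod_cast h4
  exact ⟨⟨by linarith, by linarith⟩, by rw [hz3]; linarith, by rw [hz3]; linarith⟩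

/-- If two different L-shaped blocks `L_i(a,b)` and `L_j(c,d)` are rigid in the same face
`γ` of the ladder diagram `Γ_λ` (a union of positive paths containing all top vertices),
then their interiors are disjoint. -/
theorem stmt17 (r n : ℕ) (ns : ℕ → ℕ)
    (hns0 : ns 0 = 0) (hnslast : ns (r + 1) = n)
    (hmono : ∀ j ≤ r, ns j < ns (j + 1))
    (P : Set (ℕ → ℤ × ℤ)) (hPne : P.Nonempty)
    (hP : ∀ p ∈ P, IsPositivePath (ladderVertices r n ns) n p)
    (htop : ∀ v ∈ ladderVertices r n ns, v.1 + v.2 = (n : ℤ) → ∃ p ∈ P, p n = v)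
    (i j : ℕ) (hi : 1 ≤ i) (hj : 1 ≤ j) (a b c d : ℤ)
    (hri : IsRigid P n i a b) (hrj : IsRigid P n j c d)
    (hne : (i, a, b) ≠ (j, c, d)) :
    interior (Lblock i a b) ∩ interior (Lblock j c d) = ∅ := by
  -- path structure
  have hpath : ∀ π ∈ P, π 0 = (0, 0) ∧
      ∀ s < n, π (s + 1) = π s + (1, 0) ∨ π (s + 1) = π s + (0, 1) :=
    fun π hπ => ⟨(hP π hπ).1, (hP π hπ).2.1⟩
  -- bottom vertices of the rightmost edges lie in the ladder, so b, d ≥ 1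
  have hvmem : ∀ v w, IsEdgeOf P n v w → v ∈ ladderVertices r n ns := by
    rintro v w ⟨π, hπ, s, hs, hv, hw⟩
    exact hv ▸ (hP π hπ).2.2 s hs.le
  have hb1 : 1 ≤ b := by
    obtain ⟨_, _, _, _, h0, _⟩ := hvmem _ _ hri.2.1
    simp only at h0
    omega
  have hd1 : 1 ≤ d := by
    obtain ⟨_, _, _, _, h0, _⟩ := hvmem _ _ hrj.2.1
    simp only at h0
    omega
  have SQi := no_edge_in_square hpath hri.1 hb1
  have SQj := no_edge_in_square hpath hrj.1 hd1
  -- the four special edges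
  have eRi := hri.2.1
  have eTi := hri.2.2
  have eRj := hrj.2.1
  have eTj := hrj.2.2
  rw [Set.eq_empty_iff_forall_notMem]
  rintro z ⟨hz1, hz2⟩
  rw [interior_Lblock] at hz1 hz2
  rcases hz1 with ⟨⟨x1, x2⟩, y1, y2⟩ | ⟨⟨x1, x2⟩, y1, y2⟩ <;>
    rcases hz2 with ⟨⟨u1, u2⟩, w1, w2⟩ | ⟨⟨u1, u2⟩, w1, w2⟩
  -- Case HH: both horizontal arms
  · have hbd : b = d := by
      have e1 : (b : ℝ) - 1 < (d : ℝ) := by linarith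
      have e2 : (d : ℝ) - 1 < (b : ℝ) := by linarith
      have e1' : b - 1 < d := by exact_mod_cast e1
      have e2' : d - 1 < b := by exact_mod_cast e2
      omega
    have hca : c < a + i := by
      have : (c : ℝ) - 1 < (a : ℝ) + i - 1 := by linarith
      have : (c : ℝ) < (a : ℝ) + i := by linarith
      exact_mod_cast this
    have hac : a < c + j := by
      have : (a : ℝ) - 1 < (c : ℝ) + j - 1 := by linarith
      have : (a : ℝ) < (c : ℝ) + j := by linarith
      exact_mod_cast this
    rcases lt_trichotomy (a + (i : ℤ)) (c + j) with h | h | h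
    · exact SQj _ _ eRi (by rw [seg_R]; exact R_sub_SQ hca h (by omega) (by omega))
    · rcases lt_trichotomy a c with h' | h' | h'
      · exact SQi _ _ eTj (by rw [seg_T]; exact T_sub_SQ (by omega) (by omega) (by omega) (by omega))
      · exact hne (by simp only [Prod.mk.injEq]; omega)
      · exact SQj _ _ eTi (by rw [seg_T]; exact T_sub_SQ (by omega) (by omega) (by omega) (by omega))
    · exact SQi _ _ eRj (by rw [seg_R]; exact R_sub_SQ hac h (by omega) (by omega))
  -- Case HV: horizontal arm of L_i, vertical arm of L_j
  · have hac : a ≤ c := by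
      have : (a : ℝ) - 1 < (c : ℝ) := by linarith
      have : a - 1 < c := by exact_mod_cast this
      omega
    have hca : c < a + i := by
      have : (c : ℝ) - 1 < (a : ℝ) + i - 1 := by linarith
      have : (c : ℝ) < (a : ℝ) + i := by linarith
      exact_mod_cast this
    have hdb : d ≤ b := by
      have : (d : ℝ) - 1 < (b : ℝ) := by linarith
      have : d - 1 < b := by exact_mod_cast this
      omega
    have hbd : b < d + j := by
      have : (b : ℝ) - 1 < (d : ℝ) + j - 1 := by linarith
      have : (b : ℝ) < (d : ℝ) + j := by linarith
      exact_mod_cast this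
    rcases lt_or_ge (a + (i : ℤ)) (c + j) with h | h
    · exact SQj _ _ eRi (by rw [seg_R]; exact R_sub_SQ hca h hdb (by omega))
    · rcases lt_or_ge (d + (j : ℤ)) (b + i) with h' | h'
      · exact SQi _ _ eTj (by rw [seg_T]; exact T_sub_SQ hac (by omega) (by omega) h')
      · exact hne (by simp only [Prod.mk.injEq]; omega)
  -- Case VH: vertical arm of L_i, horizontal arm of L_j
  · have hca : c ≤ a := by
      have : (c : ℝ) - 1 < (a : ℝ) := by linarith
      have : c - 1 < a := by exact_mod_cast this
      omega
    have hac : a < c + j := by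
      have : (a : ℝ) - 1 < (c : ℝ) + j - 1 := by linarith
      have : (a : ℝ) < (c : ℝ) + j := by linarith
      exact_mod_cast this
    have hbd : b ≤ d := by
      have : (b : ℝ) - 1 < (d : ℝ) := by linarith
      have : b - 1 < d := by exact_mod_cast this
      omega
    have hdb : d < b + i := by
      have : (d : ℝ) - 1 < (b : ℝ) + i - 1 := by linarith
      have : (d : ℝ) < (b : ℝ) + i := by linarith
      exact_mod_cast this
    rcases lt_or_ge (c + (j : ℤ)) (a + i) with h | h
    · exact SQi _ _ eRj (by rw [seg_R]; exact R_sub_SQ hac h hbd (by omega))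
    · rcases lt_or_ge (b + (i : ℤ)) (d + j) with h' | h'
      · exact SQj _ _ eTi (by rw [seg_T]; exact T_sub_SQ hca (by omega) (by omega) h')
      · exact hne (by simp only [Prod.mk.injEq]; omega)
  -- Case VV: both vertical arms
  · have hac : a = c := by
      have e1 : (a : ℝ) - 1 < (c : ℝ) := by linarith
      have e2 : (c : ℝ) - 1 < (a : ℝ) := by linarith
      have e1' : a - 1 < c := by exact_mod_cast e1
      have e2' : c - 1 < a := by exact_mod_cast e2
      omega
    have hdb : d < b + i := by
      have : (d : ℝ) - 1 < (b : ℝ) + i - 1 := by linarith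
      have : (d : ℝ) < (b : ℝ) + i := by linarith
      exact_mod_cast this
    have hbd : b < d + j := by
      have : (b : ℝ) - 1 < (d : ℝ) + j - 1 := by linarith
      have : (b : ℝ) < (d : ℝ) + j := by linarith
      exact_mod_cast this
    rcases lt_trichotomy (b + (i : ℤ)) (d + j) with h | h | h
    · exact SQj _ _ eTi (by rw [seg_T]; exact T_sub_SQ (by omega) (by omega) hdb h)
    · rcases lt_trichotomy b d with h' | h' | h'
      · exact SQi _ _ eRj (by rw [seg_R]; exact R_sub_SQ (by omega) (by omega) (by omega) (by omega))
      · exact hne (by simp only [Prod.mk.injEq]; omega)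
      · exact SQj _ _ eRi (by rw [seg_R]; exact R_sub_SQ (by omega) (by omega) (by omega) (by omega))
    · exact SQi _ _ eTj (by rw [seg_T]; exact T_sub_SQ (by omega) (by omega) hbd h)
end
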